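/- arXiv:1307.4904 — 6 statements merged into one kernel-verified Lean document; each statement's English description precedes it below -/
import Mathlib

section
/- For every nonzero f ∈ L²(ℝ) with x·f(x) ∈ L²(ℝ), and every δ > 0 and a, b ∈ ℂ: ‖(A_δ - a)f‖₂ · ‖(B - b)f‖₂ ≥ (1/2)|⟨f(· - δ), f⟩|, where A_δ f(x) = (f(x)-f(x-δ))/δ and Bf(x) = x f(x). -/
open MeasureTheory Complex ENNReal

namespace UncertaintyAux

noncomputable section

local notation "𝕔" => starRingEnd ℂ

lemma memL2_of_eq {p q : ℝ → ℂ} (h : MemLp p 2 (volume : Measure ℝ))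
    (he : ∀ x, p x = q x) : MemLp q 2 (volume : Measure ℝ) :=
  (funext he : p = q) ▸ h

lemma integrable_of_eq {p q : ℝ → ℂ} (h : Integrable p (volume : Measure ℝ))
    (he : ∀ x, p x = q x) : Integrable q (volume : Measure ℝ) :=
  (funext he : p = q) ▸ h

lemma memL2_conj {q : ℝ → ℂ} (hq : MemLp q 2 (volume : Measure ℝ)) :
    MemLp (fun x => 𝕔 (q x)) 2 (volume : Measure ℝ) := by
  refine ⟨RCLike.continuous_conj.comp_aestronglyMeasurable hq.1, ?_⟩
  have h : eLpNorm (fun x => 𝕔 (q x)) 2 (volume : Measure ℝ) = eLpNorm q 2 volume :=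
    eLpNorm_congr_norm_ae (Filter.Eventually.of_forall fun x => by simp)
  rw [h]; exact hq.2

lemma memL2_shift {q : ℝ → ℂ} (hq : MemLp q 2 (volume : Measure ℝ)) (c : ℝ) :
    MemLp (fun x => q (x - c)) 2 (volume : Measure ℝ) :=
  hq.comp_measurePreserving (measurePreserving_sub_right volume c)

lemma memL2_shift' {q : ℝ → ℂ} (hq : MemLp q 2 (volume : Measure ℝ)) (c : ℝ) :
    MemLp (fun x => q (x + c)) 2 (volume : Measure ℝ) :=
  hq.comp_measurePreserving (measurePreserving_add_right volume c)

lemma l2_mul {p q : ℝ → ℂ} (hp : MemLp p 2 (volume : Measure ℝ))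
    (hq : MemLp q 2 (volume : Measure ℝ)) :
    Integrable (fun x => p x * q x) (volume : Measure ℝ) := by
  rw [← memLp_one_iff_integrable]
  have h : (1 : ℝ≥0∞) / 1 = 1 / 2 + 1 / 2 := by
    rw [ENNReal.add_halves, one_div, inv_one]
  haveI : ENNReal.HolderTriple 2 2 1 := ⟨by rw [inv_one]; exact ENNReal.inv_two_add_inv_two⟩
  exact MemLp.smul hq hp

lemma int_norm_sq {g : ℝ → ℂ} (hg : MemLp g 2 (volume : Measure ℝ)) :
    Integrable (fun x => ‖g x‖ ^ 2) (volume : Measure ℝ) := by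
  have h := hg.integrable_norm_rpow two_ne_zero ENNReal.ofNat_ne_top
  refine h.congr (Filter.Eventually.of_forall fun x => ?_)
  have h2 : ((2 : ℝ≥0∞)).toReal = ((2 : ℕ) : ℝ) := by norm_num
  simp only [h2, Real.rpow_natCast]

lemma cs {p q : ℝ → ℂ} (hp : MemLp p 2 (volume : Measure ℝ))
    (hq : MemLp q 2 (volume : Measure ℝ)) :
    ‖∫ x : ℝ, p x * 𝕔 (q x)‖
      ≤ (∫ x : ℝ, ‖p x‖ ^ 2) ^ ((1 : ℝ) / 2) * (∫ x : ℝ, ‖q x‖ ^ 2) ^ ((1 : ℝ) / 2) := by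
  have h2 : (2 : ℝ).HolderConjugate 2 := ⟨by norm_num, by norm_num, by norm_num⟩
  have hp' : MemLp p (ENNReal.ofReal 2) (volume : Measure ℝ) := by
    rwa [ENNReal.ofReal_ofNat]
  have hq' : MemLp (fun x => 𝕔 (q x)) (ENNReal.ofReal 2) (volume : Measure ℝ) := by
    rw [ENNReal.ofReal_ofNat]; exact memL2_conj hq
  have key := integral_mul_norm_le_Lp_mul_Lq (μ := (volume : Measure ℝ)) h2 hp' hq'
  have e1 : (∫ x : ℝ, ‖p x‖ ^ (2 : ℝ)) = ∫ x : ℝ, ‖p x‖ ^ 2 := by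
    refine integral_congr_ae (Filter.Eventually.of_forall fun x => ?_)
    simp only [show (2 : ℝ) = ((2 : ℕ) : ℝ) by norm_num, Real.rpow_natCast]
  have e2 : (∫ x : ℝ, ‖𝕔 (q x)‖ ^ (2 : ℝ)) = ∫ x : ℝ, ‖q x‖ ^ 2 := by
    refine integral_congr_ae (Filter.Eventually.of_forall fun x => ?_)
    simp only [show (2 : ℝ) = ((2 : ℕ) : ℝ) by norm_num, Real.rpow_natCast, RCLike.norm_conj]
  rw [e1, e2] at key
  calc ‖∫ x : ℝ, p x * 𝕔 (q x)‖ ≤ ∫ x : ℝ, ‖p x * 𝕔 (q x)‖ :=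
        norm_integral_le_integral_norm _
    _ = ∫ x : ℝ, ‖p x‖ * ‖𝕔 (q x)‖ := by
        refine integral_congr_ae (Filter.Eventually.of_forall fun x => ?_)
        simp only [norm_mul]
    _ ≤ _ := key

lemma expand {g h : ℝ → ℂ} (hg : MemLp g 2 (volume : Measure ℝ))
    (hh : MemLp h 2 (volume : Measure ℝ)) :
    ∫ x : ℝ, ‖g x - h x‖ ^ 2
      = (∫ x : ℝ, ‖g x‖ ^ 2) - 2 * (∫ x : ℝ, g x * 𝕔 (h x)).re + ∫ x : ℝ, ‖h x‖ ^ 2 := by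
  have hgh : Integrable (fun x => g x * 𝕔 (h x)) (volume : Measure ℝ) :=
    l2_mul hg (memL2_conj hh)
  have hptw : ∀ x : ℝ, ‖g x - h x‖ ^ 2
      = ‖g x‖ ^ 2 - 2 * (g x * 𝕔 (h x)).re + ‖h x‖ ^ 2 := by
    intro x
    simp only [Complex.sq_norm, Complex.normSq_sub]
    ring
  have hre : ∫ x : ℝ, (g x * 𝕔 (h x)).re = (∫ x : ℝ, g x * 𝕔 (h x)).re := by
    have := integral_re (μ := (volume : Measure ℝ)) hgh
    simpa using this
  calc ∫ x : ℝ, ‖g x - h x‖ ^ 2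
      = ∫ x : ℝ, (‖g x‖ ^ 2 - 2 * (g x * 𝕔 (h x)).re + ‖h x‖ ^ 2) :=
        integral_congr_ae (Filter.Eventually.of_forall hptw)
    _ = (∫ x : ℝ, (‖g x‖ ^ 2 - 2 * (g x * 𝕔 (h x)).re)) + ∫ x : ℝ, ‖h x‖ ^ 2 := by
        have hint1 : Integrable (fun x : ℝ => ‖g x‖ ^ 2 - 2 * (g x * 𝕔 (h x)).re) volume := by
          exact (int_norm_sq hg).sub (hgh.re.const_mul 2)
        rw [integral_add hint1 (int_norm_sq hh)]
    _ = (∫ x : ℝ, ‖g x‖ ^ 2) - 2 * (∫ x : ℝ, g x * 𝕔 (h x)).re + ∫ x : ℝ, ‖h x‖ ^ 2 := by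
        have hint2 : Integrable (fun x : ℝ => 2 * (g x * 𝕔 (h x)).re) volume := by
          exact hgh.re.const_mul 2
        rw [integral_sub (int_norm_sq hg) hint2, integral_const_mul, hre]

end

end UncertaintyAux

open UncertaintyAux

/-- Uncertainty inequality for the backward difference operator
`A_δ f (x) = (f x - f (x-δ))/δ` and the multiplication operator `B f (x) = x f x`
on `L²(ℝ)`:  `‖(A_δ - a) f‖₂ ‖(B - b) f‖₂ ≥ (1/2) |⟨f(·-δ), f⟩|`. -/
theorem uncertainty_backward_difference
    (δ : ℝ) (hδ : 0 < δ) (f : ℝ → ℂ)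
    (hf : MemLp f 2 (volume : Measure ℝ))
    (hxf : MemLp (fun x : ℝ => (x : ℂ) * f x) 2 (volume : Measure ℝ))
    (hne : ¬ f =ᵐ[volume] (0 : ℝ → ℂ))
    (a b : ℂ) :
    (∫ x : ℝ, ‖(f x - f (x - δ)) / (δ : ℂ) - a * f x‖ ^ 2) ^ ((1 : ℝ) / 2)
      * (∫ x : ℝ, ‖(x : ℂ) * f x - b * f x‖ ^ 2) ^ ((1 : ℝ) / 2)
    ≥ (1 / 2) * ‖∫ x : ℝ, f (x - δ) * (starRingEnd ℂ) (f x)‖ := by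
  clear hne
  have hδc : (δ : ℂ) ≠ 0 := Complex.ofReal_ne_zero.2 hδ.ne'
  -- membership facts
  have hfs : MemLp (fun x : ℝ => f (x - δ)) 2 (volume : Measure ℝ) := memL2_shift hf δ
  have hfp : MemLp (fun x : ℝ => f (x + δ)) 2 (volume : Measure ℝ) := memL2_shift' hf δ
  have hcf : MemLp (fun x : ℝ => (starRingEnd ℂ) (f x)) 2 (volume : Measure ℝ) := memL2_conj hf
  have hcfs : MemLp (fun x : ℝ => (starRingEnd ℂ) (f (x - δ))) 2 (volume : Measure ℝ) :=
    memL2_conj hfs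
  have hcfp : MemLp (fun x : ℝ => (starRingEnd ℂ) (f (x + δ))) 2 (volume : Measure ℝ) :=
    memL2_conj hfp
  have hxcf : MemLp (fun x : ℝ => (x : ℂ) * (starRingEnd ℂ) (f x)) 2 (volume : Measure ℝ) := by
    refine memL2_of_eq (memL2_conj hxf) ?_
    intro x; simp [map_mul, Complex.conj_ofReal]
  have hDf : MemLp (fun x : ℝ => (f x - f (x - δ)) / (δ : ℂ)) 2 (volume : Measure ℝ) :=
    memL2_of_eq ((hf.sub hfs).const_mul ((δ : ℂ)⁻¹)) (fun x => by (try simp only [Pi.sub_apply]); ring)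
  have hDs : MemLp (fun x : ℝ => (f x - f (x + δ)) / (δ : ℂ)) 2 (volume : Measure ℝ) :=
    memL2_of_eq ((hf.sub hfp).const_mul ((δ : ℂ)⁻¹)) (fun x => by (try simp only [Pi.sub_apply]); ring)
  have hu : MemLp (fun x : ℝ => (f x - f (x - δ)) / (δ : ℂ) - a * f x) 2 (volume : Measure ℝ) :=
    hDf.sub (hf.const_mul a)
  have hw : MemLp (fun x : ℝ =>
      (f x - f (x + δ)) / (δ : ℂ) - (starRingEnd ℂ) a * f x) 2 (volume : Measure ℝ) :=
    hDs.sub (hf.const_mul ((starRingEnd ℂ) a))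
  have hv : MemLp (fun x : ℝ => (x : ℂ) * f x - b * f x) 2 (volume : Measure ℝ) :=
    hxf.sub (hf.const_mul b)
  have hv' : MemLp (fun x : ℝ => ((x : ℂ) - (starRingEnd ℂ) b) * f x) 2 (volume : Measure ℝ) :=
    memL2_of_eq (hxf.sub (hf.const_mul ((starRingEnd ℂ) b))) (fun x => by (try simp only [Pi.sub_apply]); ring)
  -- key adjoint identity : ∫ Ds ⬝ conj f = conj (∫ Df ⬝ conj f)
  have hJ : ∫ x : ℝ, ((f x - f (x + δ)) / (δ : ℂ)) * (starRingEnd ℂ) (f x)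
      = (starRingEnd ℂ) (∫ x : ℝ, ((f x - f (x - δ)) / (δ : ℂ)) * (starRingEnd ℂ) (f x)) := by
    rw [← integral_conj]
    have h1 : Integrable (fun x : ℝ =>
        ((f x - f (x + δ)) / (δ : ℂ)) * (starRingEnd ℂ) (f x)) volume := l2_mul hDs hcf
    have hcDf : MemLp (fun x : ℝ =>
        ((starRingEnd ℂ) (f x) - (starRingEnd ℂ) (f (x - δ))) / (δ : ℂ)) 2
        (volume : Measure ℝ) :=
      memL2_of_eq ((hcf.sub hcfs).const_mul ((δ : ℂ)⁻¹)) (fun x => by (try simp only [Pi.sub_apply]); ring)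
    have h2 : Integrable (fun x : ℝ =>
        (starRingEnd ℂ) (((f x - f (x - δ)) / (δ : ℂ)) * (starRingEnd ℂ) (f x))) volume := by
      refine integrable_of_eq (l2_mul hcDf hf) ?_
      intro x
      simp only [map_mul, map_sub, map_div₀, Complex.conj_conj, Complex.conj_ofReal]
    have hsh : ∫ x : ℝ, f x * (starRingEnd ℂ) (f (x - δ))
        = ∫ x : ℝ, f (x + δ) * (starRingEnd ℂ) (f x) := by
      have h := integral_sub_right_eq_self (μ := volume)
        (fun x : ℝ => f (x + δ) * (starRingEnd ℂ) (f x)) δ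
      rw [← h]
      refine integral_congr_ae (Filter.Eventually.of_forall fun x => ?_)
      norm_num
    have hAB1 : Integrable (fun x : ℝ => f x * (starRingEnd ℂ) (f (x - δ))) volume :=
      l2_mul hf hcfs
    have hAB2 : Integrable (fun x : ℝ => f (x + δ) * (starRingEnd ℂ) (f x)) volume :=
      l2_mul hfp hcf
    rw [← sub_eq_zero, ← integral_sub h1 h2]
    have hptw : ∀ x : ℝ,
        ((f x - f (x + δ)) / (δ : ℂ)) * (starRingEnd ℂ) (f x)
          - (starRingEnd ℂ) (((f x - f (x - δ)) / (δ : ℂ)) * (starRingEnd ℂ) (f x))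
        = (δ : ℂ)⁻¹ * (f x * (starRingEnd ℂ) (f (x - δ)) - f (x + δ) * (starRingEnd ℂ) (f x)) := by
      intro x
      simp only [map_mul, map_sub, map_div₀, Complex.conj_conj, Complex.conj_ofReal]
      ring
    rw [integral_congr_ae (Filter.Eventually.of_forall hptw), integral_const_mul,
      integral_sub hAB1 hAB2, hsh, sub_self, mul_zero]
  -- transfer of the norm of w to the norm of u
  have hNw : ∫ x : ℝ, ‖(f x - f (x + δ)) / (δ : ℂ) - (starRingEnd ℂ) a * f x‖ ^ 2
      = ∫ x : ℝ, ‖(f x - f (x - δ)) / (δ : ℂ) - a * f x‖ ^ 2 := by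
    have e1 := expand hDs (hf.const_mul ((starRingEnd ℂ) a))
    have e2 := expand hDf (hf.const_mul a)
    rw [e1, e2]
    have hA : ∫ x : ℝ, ‖(f x - f (x + δ)) / (δ : ℂ)‖ ^ 2
        = ∫ x : ℝ, ‖(f x - f (x - δ)) / (δ : ℂ)‖ ^ 2 := by
      have h := integral_add_right_eq_self (μ := volume)
        (fun x : ℝ => ‖(f x - f (x - δ)) / (δ : ℂ)‖ ^ 2) δ
      rw [← h]
      refine integral_congr_ae (Filter.Eventually.of_forall fun x => ?_)
      simp only []
      have hx : x + δ - δ = x := by ring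
      rw [hx, ← norm_neg ((f (x + δ) - f x) / (δ : ℂ))]
      congr 2
      ring
    have hB : ∫ x : ℝ, ‖(starRingEnd ℂ) a * f x‖ ^ 2 = ∫ x : ℝ, ‖a * f x‖ ^ 2 := by
      refine integral_congr_ae (Filter.Eventually.of_forall fun x => ?_)
      simp only [norm_mul, RCLike.norm_conj]
    have hl : ∫ x : ℝ, ((f x - f (x + δ)) / (δ : ℂ))
          * (starRingEnd ℂ) ((starRingEnd ℂ) a * f x)
        = a * ∫ x : ℝ, ((f x - f (x + δ)) / (δ : ℂ)) * (starRingEnd ℂ) (f x) := by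
      rw [← integral_const_mul]
      refine integral_congr_ae (Filter.Eventually.of_forall fun x => ?_)
      simp only [map_mul, Complex.conj_conj]
      ring
    have hr : ∫ x : ℝ, ((f x - f (x - δ)) / (δ : ℂ)) * (starRingEnd ℂ) (a * f x)
        = (starRingEnd ℂ) a
          * ∫ x : ℝ, ((f x - f (x - δ)) / (δ : ℂ)) * (starRingEnd ℂ) (f x) := by
      rw [← integral_const_mul]
      refine integral_congr_ae (Filter.Eventually.of_forall fun x => ?_)
      simp only [map_mul]
      ring
    rw [hA, hB, hl, hr, hJ]
    congr 1
    congr 1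
    simp only [Complex.mul_re, Complex.conj_re, Complex.conj_im]
    ring
  -- norm transfer for v'
  have hv'n : ∫ x : ℝ, ‖((x : ℂ) - (starRingEnd ℂ) b) * f x‖ ^ 2
      = ∫ x : ℝ, ‖(x : ℂ) * f x - b * f x‖ ^ 2 := by
    refine integral_congr_ae (Filter.Eventually.of_forall fun x => ?_)
    have h1 : (x : ℂ) * f x - b * f x = ((x : ℂ) - b) * f x := by ring
    have h2 : ((x : ℂ) - (starRingEnd ℂ) b) = (starRingEnd ℂ) ((x : ℂ) - b) := by
      simp [map_sub, Complex.conj_ofReal]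
    simp only []
    rw [h1, norm_mul, norm_mul, h2, RCLike.norm_conj]
  -- the commutator identity
  have hI1int : Integrable (fun x : ℝ => ((x : ℂ) * f x - b * f x)
      * (starRingEnd ℂ) ((f x - f (x + δ)) / (δ : ℂ) - (starRingEnd ℂ) a * f x)) volume :=
    l2_mul hv (memL2_conj hw)
  have hI2int : Integrable (fun x : ℝ => ((f x - f (x - δ)) / (δ : ℂ) - a * f x)
      * (starRingEnd ℂ) (((x : ℂ) - (starRingEnd ℂ) b) * f x)) volume :=
    l2_mul hu (memL2_conj hv')
  have hPcoef : MemLp (fun x : ℝ => (((x : ℂ) - b) / (δ : ℂ)) * (starRingEnd ℂ) (f x)) 2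
      (volume : Measure ℝ) :=
    memL2_of_eq ((hxcf.sub (hcf.const_mul b)).const_mul ((δ : ℂ)⁻¹)) (fun x => by (try simp only [Pi.sub_apply]); ring)
  have hP2coef : MemLp (fun x : ℝ =>
      (((x : ℂ) - (δ : ℂ) - b) / (δ : ℂ)) * (starRingEnd ℂ) (f x)) 2 (volume : Measure ℝ) :=
    memL2_of_eq ((hxcf.sub (hcf.const_mul (b + (δ : ℂ)))).const_mul ((δ : ℂ)⁻¹))
      (fun x => by (try simp only [Pi.sub_apply]); ring)
  have hQcoef : MemLp (fun x : ℝ => (((x : ℂ) - b) / (δ : ℂ)) * f x) 2 (volume : Measure ℝ) :=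
    memL2_of_eq (hv.const_mul ((δ : ℂ)⁻¹)) (fun x => by (try simp only [Pi.sub_apply]); ring)
  have hPint : Integrable (fun x : ℝ =>
      (((x : ℂ) - b) / (δ : ℂ)) * (f (x - δ) * (starRingEnd ℂ) (f x))) volume :=
    integrable_of_eq (l2_mul hfs hPcoef) (fun x => by (try simp only [Pi.sub_apply]); ring)
  have hP2int : Integrable (fun x : ℝ =>
      (((x : ℂ) - (δ : ℂ) - b) / (δ : ℂ)) * (f (x - δ) * (starRingEnd ℂ) (f x))) volume :=
    integrable_of_eq (l2_mul hfs hP2coef) (fun x => by (try simp only [Pi.sub_apply]); ring)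
  have hQint : Integrable (fun x : ℝ =>
      (((x : ℂ) - b) / (δ : ℂ)) * (f x * (starRingEnd ℂ) (f (x + δ)))) volume :=
    integrable_of_eq (l2_mul hQcoef hcfp) (fun x => by (try simp only [Pi.sub_apply]); ring)
  have hshiftQ : ∫ x : ℝ, (((x : ℂ) - b) / (δ : ℂ)) * (f x * (starRingEnd ℂ) (f (x + δ)))
      = ∫ x : ℝ, (((x : ℂ) - (δ : ℂ) - b) / (δ : ℂ)) * (f (x - δ) * (starRingEnd ℂ) (f x)) := by
    have h := integral_sub_right_eq_self (μ := volume)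
      (fun x : ℝ => (((x : ℂ) - b) / (δ : ℂ)) * (f x * (starRingEnd ℂ) (f (x + δ)))) δ
    rw [← h]
    refine integral_congr_ae (Filter.Eventually.of_forall fun x => ?_)
    simp only []
    have hx : x - δ + δ = x := by ring
    rw [hx]
    push_cast
    ring
  have hident : ∫ x : ℝ, f (x - δ) * (starRingEnd ℂ) (f x)
      = (∫ x : ℝ, ((x : ℂ) * f x - b * f x)
          * (starRingEnd ℂ) ((f x - f (x + δ)) / (δ : ℂ) - (starRingEnd ℂ) a * f x))
        - ∫ x : ℝ, ((f x - f (x - δ)) / (δ : ℂ) - a * f x)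
          * (starRingEnd ℂ) (((x : ℂ) - (starRingEnd ℂ) b) * f x) := by
    calc ∫ x : ℝ, f (x - δ) * (starRingEnd ℂ) (f x)
        = ∫ x : ℝ, ((((x : ℂ) - b) / (δ : ℂ)) * (f (x - δ) * (starRingEnd ℂ) (f x))
            - (((x : ℂ) - (δ : ℂ) - b) / (δ : ℂ)) * (f (x - δ) * (starRingEnd ℂ) (f x))) := by
          refine integral_congr_ae (Filter.Eventually.of_forall fun x => ?_)
          field_simp
          ring
      _ = (∫ x : ℝ, (((x : ℂ) - b) / (δ : ℂ)) * (f (x - δ) * (starRingEnd ℂ) (f x)))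
            - ∫ x : ℝ, (((x : ℂ) - (δ : ℂ) - b) / (δ : ℂ))
              * (f (x - δ) * (starRingEnd ℂ) (f x)) := integral_sub hPint hP2int
      _ = (∫ x : ℝ, (((x : ℂ) - b) / (δ : ℂ)) * (f (x - δ) * (starRingEnd ℂ) (f x)))
            - ∫ x : ℝ, (((x : ℂ) - b) / (δ : ℂ)) * (f x * (starRingEnd ℂ) (f (x + δ))) := by
          rw [hshiftQ]
      _ = ∫ x : ℝ, ((((x : ℂ) - b) / (δ : ℂ)) * (f (x - δ) * (starRingEnd ℂ) (f x))
            - (((x : ℂ) - b) / (δ : ℂ)) * (f x * (starRingEnd ℂ) (f (x + δ)))) :=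
          (integral_sub hPint hQint).symm
      _ = ∫ x : ℝ, (((x : ℂ) * f x - b * f x)
            * (starRingEnd ℂ) ((f x - f (x + δ)) / (δ : ℂ) - (starRingEnd ℂ) a * f x)
          - ((f x - f (x - δ)) / (δ : ℂ) - a * f x)
            * (starRingEnd ℂ) (((x : ℂ) - (starRingEnd ℂ) b) * f x)) := by
          refine integral_congr_ae (Filter.Eventually.of_forall fun x => ?_)
          simp only [map_mul, map_sub, map_div₀, Complex.conj_conj, Complex.conj_ofReal]
          ring
      _ = _ := integral_sub hI1int hI2int
  -- Cauchy-Schwarz bounds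
  have hcs1 := cs hv hw
  have hcs2 := cs hu hv'
  rw [hNw] at hcs1
  rw [hv'n] at hcs2
  have hXnn : (0 : ℝ) ≤ (∫ x : ℝ, ‖(f x - f (x - δ)) / (δ : ℂ) - a * f x‖ ^ 2) ^ ((1 : ℝ) / 2) :=
    Real.rpow_nonneg (integral_nonneg fun x => by positivity) _
  have hYnn : (0 : ℝ) ≤ (∫ x : ℝ, ‖(x : ℂ) * f x - b * f x‖ ^ 2) ^ ((1 : ℝ) / 2) :=
    Real.rpow_nonneg (integral_nonneg fun x => by positivity) _
  have hN : ‖∫ x : ℝ, f (x - δ) * (starRingEnd ℂ) (f x)‖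
      ≤ 2 * ((∫ x : ℝ, ‖(f x - f (x - δ)) / (δ : ℂ) - a * f x‖ ^ 2) ^ ((1 : ℝ) / 2)
        * (∫ x : ℝ, ‖(x : ℂ) * f x - b * f x‖ ^ 2) ^ ((1 : ℝ) / 2)) := by
    rw [hident]
    refine (norm_sub_le _ _).trans ?_
    have := hcs1
    nlinarith [hcs1, hcs2]
  linarith
end

section
/- For every nonzero f ∈ L²(ℝ) with x·f(x) ∈ L²(ℝ), and every δ > 0 and a, b ∈ ℂ: ‖(C_δ - a)f‖₂ · ‖(B - b)f‖₂ ≥ (1/2)|⟨(f(· + δ) + f(· - δ))/2, f⟩|, where C_δ f(x) = (f(x+δ)-f(x-δ))/(2δ). -/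
open MeasureTheory Complex

local notation "conj'" => starRingEnd ℂ

private lemma aux_conj_mem {g : ℝ → ℂ} (hg : MemLp g 2 (volume : Measure ℝ)) :
    MemLp (fun x => conj' (g x)) 2 (volume : Measure ℝ) :=
  ⟨Complex.continuous_conj.comp_aestronglyMeasurable hg.1,
   by rw [show (fun x => conj' (g x)) = conj' ∘ g from rfl]
      exact (eLpNorm_conj g 2 volume).le.trans_lt hg.2⟩

private lemma aux_mul_int {g h : ℝ → ℂ} (hg : MemLp g 2 (volume : Measure ℝ))
    (hh : MemLp h 2 (volume : Measure ℝ)) :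
    Integrable (fun x => g x * h x) volume := by
  have h2 : MemLp (g • h) 1 (volume : Measure ℝ) :=
    hh.smul hg
  exact memLp_one_iff_integrable.mp h2

private lemma aux_sq_int {g : ℝ → ℂ} (hg : MemLp g 2 (volume : Measure ℝ)) :
    Integrable (fun x => ‖g x‖ ^ 2) volume := by
  have := hg.integrable_norm_rpow two_ne_zero ENNReal.ofNat_ne_top
  simpa [ENNReal.toReal_ofNat, Real.rpow_natCast] using this

private lemma aux_norm_toLp {u : ℝ → ℂ} (hu : MemLp u 2 (volume : Measure ℝ)) :
    ‖hu.toLp u‖ = (∫ x, ‖u x‖ ^ 2) ^ ((1:ℝ)/2) := by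
  have h1 : RCLike.re (inner (𝕜 := ℂ) (hu.toLp u) (hu.toLp u)) = ‖hu.toLp u‖ ^ 2 :=
    inner_self_eq_norm_sq _
  have h2 : (inner (𝕜 := ℂ) (hu.toLp u) (hu.toLp u)) = ((∫ x, ‖u x‖ ^ 2 : ℝ) : ℂ) := by
    rw [L2.inner_def]
    have : ∫ (a : ℝ), inner (𝕜 := ℂ) ((hu.toLp u : Lp ℂ 2 (volume : Measure ℝ)) a)
        ((hu.toLp u) a) = ∫ (a : ℝ), ((‖u a‖ ^ 2 : ℝ) : ℂ) := by
      apply integral_congr_ae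
      filter_upwards [hu.coeFn_toLp] with x h1
      rw [h1, RCLike.inner_apply, RCLike.mul_conj]
      push_cast
      norm_num
    rw [this]; exact integral_ofReal
  rw [h2] at h1
  have h3 : (∫ x, ‖u x‖ ^ 2) = ‖hu.toLp u‖ ^ 2 := by exact_mod_cast h1
  rw [h3, ← Real.sqrt_eq_rpow, Real.sqrt_sq (norm_nonneg _)]

private lemma aux_cs {u v : ℝ → ℂ} (hu : MemLp u 2 (volume : Measure ℝ))
    (hv : MemLp v 2 (volume : Measure ℝ)) :
    ‖∫ x, conj' (u x) * v x‖ ≤ (∫ x, ‖u x‖ ^ 2) ^ ((1:ℝ)/2) * (∫ x, ‖v x‖ ^ 2) ^ ((1:ℝ)/2) := by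
  have h1 : (inner (𝕜 := ℂ) (hu.toLp u) (hv.toLp v)) = ∫ x, conj' (u x) * v x := by
    rw [L2.inner_def]
    apply integral_congr_ae
    filter_upwards [hu.coeFn_toLp, hv.coeFn_toLp] with x e1 e2
    rw [e1, e2, RCLike.inner_apply, mul_comm]
  calc ‖∫ x, conj' (u x) * v x‖ = ‖(inner (𝕜 := ℂ) (hu.toLp u) (hv.toLp v))‖ := by rw [h1]
    _ ≤ ‖hu.toLp u‖ * ‖hv.toLp v‖ := norm_inner_le_norm _ _
    _ = _ := by rw [aux_norm_toLp hu, aux_norm_toLp hv]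

/-- Uncertainty inequality for the central difference operator
`C_δ f (x) = (f (x+δ) - f (x-δ))/(2δ)` and the multiplication operator
`B f (x) = x f x` on `L²(ℝ)`:
`‖(C_δ - a) f‖₂ ‖(B - b) f‖₂ ≥ (1/2) |⟨(f(·+δ) + f(·-δ))/2, f⟩|`. -/
theorem uncertainty_central_difference
    (δ : ℝ) (hδ : 0 < δ) (f : ℝ → ℂ)
    (hf : MemLp f 2 (volume : Measure ℝ))
    (hxf : MemLp (fun x : ℝ => (x : ℂ) * f x) 2 (volume : Measure ℝ))
    (hne : ¬ f =ᵐ[volume] (0 : ℝ → ℂ))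
    (a b : ℂ) :
    (∫ x : ℝ, ‖(f (x + δ) - f (x - δ)) / (2 * (δ : ℂ)) - a * f x‖ ^ 2) ^ ((1 : ℝ) / 2)
      * (∫ x : ℝ, ‖(x : ℂ) * f x - b * f x‖ ^ 2) ^ ((1 : ℝ) / 2)
    ≥ (1 / 2) * ‖∫ x : ℝ, (f (x + δ) + f (x - δ)) / 2 * (starRingEnd ℂ) (f x)‖ := by
  have hδc : (δ : ℂ) ≠ 0 := Complex.ofReal_ne_zero.mpr hδ.ne'
  -- abbreviations
  set q : ℝ → ℂ := fun x => conj' (f (x + δ)) * f x + f (x + δ) * conj' (f x) with hq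
  set u : ℝ → ℂ :=
    fun x => (f (x + δ) - f (x - δ)) / (2 * (δ : ℂ)) - (a.im : ℂ) * Complex.I * f x with hu
  set v : ℝ → ℂ := fun x => ((x : ℂ) - (b.re : ℂ)) * f x with hv
  -- membership in L²
  have hfp : MemLp (fun x => f (x + δ)) 2 (volume : Measure ℝ) :=
    hf.comp_measurePreserving (measurePreserving_add_right volume δ)
  have hfm : MemLp (fun x => f (x - δ)) 2 (volume : Measure ℝ) :=
    hf.comp_measurePreserving (measurePreserving_sub_right volume δ)
  have hu2 : MemLp u 2 (volume : Measure ℝ) := by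
    rw [hu]
    have e : (fun x => (f (x + δ) - f (x - δ)) / (2 * (δ : ℂ)))
        = fun x => (2 * (δ : ℂ))⁻¹ * (f (x + δ) - f (x - δ)) := by
      funext x; rw [div_eq_mul_inv, mul_comm]
    have h1 : MemLp (fun x => (f (x + δ) - f (x - δ)) / (2 * (δ : ℂ))) 2
        (volume : Measure ℝ) := by rw [e]; exact (hfp.sub hfm).const_mul _
    exact h1.sub (hf.const_mul _)
  have hv2 : MemLp v 2 (volume : Measure ℝ) := by
    rw [hv]
    have e : (fun x : ℝ => ((x : ℂ) - (b.re : ℂ)) * f x)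
        = fun x : ℝ => (x : ℂ) * f x - (b.re : ℂ) * f x := by funext x; ring
    rw [e]; exact hxf.sub (hf.const_mul _)
  have hwm : MemLp (fun x : ℝ => ((x : ℂ) - (b.re : ℂ)) * f (x - δ)) 2 (volume : Measure ℝ) := by
    have h1 : MemLp (fun x : ℝ => ((x - δ : ℝ) : ℂ) * f (x - δ)) 2 (volume : Measure ℝ) :=
      hxf.comp_measurePreserving (measurePreserving_sub_right volume δ)
    have e : (fun x : ℝ => ((x : ℂ) - (b.re : ℂ)) * f (x - δ))
        = fun x : ℝ => ((x - δ : ℝ) : ℂ) * f (x - δ) + ((δ : ℂ) - (b.re : ℂ)) * f (x - δ) := by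
      funext x; push_cast; ring
    rw [e]; exact h1.add (hfm.const_mul _)
  -- integrability
  have iq : Integrable q volume := by
    rw [hq]
    exact (aux_mul_int (aux_conj_mem hfp) hf).add (aux_mul_int hfp (aux_conj_mem hf))
  have iqm : Integrable (fun x => q (x - δ)) volume := by
    have e : (fun x => q (x - δ))
        = fun x => conj' (f x) * f (x - δ) + f x * conj' (f (x - δ)) := by
      funext x; rw [hq]; simp [sub_add_cancel]
    rw [e]; exact (aux_mul_int (aux_conj_mem hf) hfm).add (aux_mul_int hf (aux_conj_mem hfm))
  have ixq : Integrable (fun x : ℝ => ((x : ℂ) - (b.re : ℂ)) * q x) volume := by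
    have e : (fun x : ℝ => ((x : ℂ) - (b.re : ℂ)) * q x)
        = fun x : ℝ => conj' (f (x + δ)) * v x + f (x + δ) * conj' (v x) := by
      funext x; rw [hq, hv]
      simp only [map_mul, map_sub, Complex.conj_ofReal]
      ring
    rw [e]; exact (aux_mul_int (aux_conj_mem hfp) hv2).add (aux_mul_int hfp (aux_conj_mem hv2))
  have ixqm : Integrable (fun x : ℝ => ((x : ℂ) - (b.re : ℂ)) * q (x - δ)) volume := by
    have e : (fun x : ℝ => ((x : ℂ) - (b.re : ℂ)) * q (x - δ))
        = fun x : ℝ => conj' (f x) * (((x : ℂ) - (b.re : ℂ)) * f (x - δ))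
          + f x * conj' (((x : ℂ) - (b.re : ℂ)) * f (x - δ)) := by
      funext x; rw [hq]
      simp only [map_mul, map_sub, Complex.conj_ofReal, sub_add_cancel]
      ring
    rw [e]; exact (aux_mul_int (aux_conj_mem hf) hwm).add (aux_mul_int hf (aux_conj_mem hwm))
  have iuv : Integrable (fun x => conj' (u x) * v x) volume := aux_mul_int (aux_conj_mem hu2) hv2
  have iuv' : Integrable (fun x => u x * conj' (v x)) volume := aux_mul_int hu2 (aux_conj_mem hv2)
  have iuf : Integrable (fun x => conj' (u x) * f x) volume := aux_mul_int (aux_conj_mem hu2) hf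
  have iuf' : Integrable (fun x => u x * conj' (f x)) volume := aux_mul_int hu2 (aux_conj_mem hf)
  have ifpf : Integrable (fun x => f (x + δ) * conj' (f x)) volume :=
    aux_mul_int hfp (aux_conj_mem hf)
  have ifmf : Integrable (fun x => f (x - δ) * conj' (f x)) volume :=
    aux_mul_int hfm (aux_conj_mem hf)
  have icfpf : Integrable (fun x => conj' (f (x + δ)) * f x) volume :=
    aux_mul_int (aux_conj_mem hfp) hf
  -- translation invariance identities
  have S0 : ∫ x : ℝ, q (x - δ) = ∫ x : ℝ, q x := by
    have h := integral_add_right_eq_self (μ := volume) (fun x => q (x - δ)) δ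
    simp only [add_sub_cancel_right] at h
    exact h.symm
  have S1 : ∫ x : ℝ, ((x : ℂ) - (b.re : ℂ)) * q (x - δ)
      = (∫ x : ℝ, ((x : ℂ) - (b.re : ℂ)) * q x) + (δ : ℂ) * ∫ x : ℝ, q x := by
    have h := integral_add_right_eq_self (μ := volume)
      (fun x : ℝ => ((x : ℂ) - (b.re : ℂ)) * q (x - δ)) δ
    simp only [add_sub_cancel_right, Complex.ofReal_add] at h
    rw [← h]
    have e : (fun x : ℝ => ((x : ℂ) + (δ : ℂ) - (b.re : ℂ)) * q x)
        = fun x : ℝ => ((x : ℂ) - (b.re : ℂ)) * q x + (δ : ℂ) * q x := by funext x; ring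
    calc ∫ x : ℝ, ((x : ℂ) + (δ : ℂ) - (b.re : ℂ)) * q x
        = ∫ x : ℝ, (((x : ℂ) - (b.re : ℂ)) * q x + (δ : ℂ) * q x) := by rw [e]
      _ = (∫ x : ℝ, ((x : ℂ) - (b.re : ℂ)) * q x) + ∫ x : ℝ, (δ : ℂ) * q x :=
          integral_add ixq (iq.const_mul _)
      _ = (∫ x : ℝ, ((x : ℂ) - (b.re : ℂ)) * q x) + (δ : ℂ) * ∫ x : ℝ, q x := by
          rw [integral_const_mul]
  have S2 : ∫ x : ℝ, f (x - δ) * conj' (f x) = ∫ x : ℝ, conj' (f (x + δ)) * f x := by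
    have h := integral_add_right_eq_self (μ := volume) (fun x => f (x - δ) * conj' (f x)) δ
    simp only [add_sub_cancel_right] at h
    rw [← h]
    exact integral_congr_ae (Filter.Eventually.of_forall fun x => mul_comm _ _)
  -- the two commutator-type identities
  have key : (∫ x, conj' (u x) * v x) + (∫ x, u x * conj' (v x))
      = -(2⁻¹ : ℂ) * ∫ x, q x := by
    have hpt : ∀ x : ℝ, conj' (u x) * v x + u x * conj' (v x)
        = (2 * (δ : ℂ))⁻¹ * (((x : ℂ) - (b.re : ℂ)) * q x
            - ((x : ℂ) - (b.re : ℂ)) * q (x - δ)) := by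
      intro x
      rw [hu, hv, hq]
      simp only [map_sub, map_add, map_mul, map_div₀, map_ofNat, Complex.conj_ofReal,
        Complex.conj_I, sub_add_cancel]
      ring
    calc (∫ x, conj' (u x) * v x) + (∫ x, u x * conj' (v x))
        = ∫ x, (conj' (u x) * v x + u x * conj' (v x)) := (integral_add iuv iuv').symm
      _ = ∫ x : ℝ, (2 * (δ : ℂ))⁻¹ * (((x : ℂ) - (b.re : ℂ)) * q x
            - ((x : ℂ) - (b.re : ℂ)) * q (x - δ)) :=
          integral_congr_ae (Filter.Eventually.of_forall hpt)
      _ = (2 * (δ : ℂ))⁻¹ * ((∫ x : ℝ, ((x : ℂ) - (b.re : ℂ)) * q x)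
            - ∫ x : ℝ, ((x : ℂ) - (b.re : ℂ)) * q (x - δ)) := by
          rw [integral_const_mul, integral_sub ixq ixqm]
      _ = -(2⁻¹ : ℂ) * ∫ x, q x := by
          rw [S1]
          field_simp
          ring
  have keyf : (∫ x, conj' (u x) * f x) + (∫ x, u x * conj' (f x)) = 0 := by
    have hpt : ∀ x : ℝ, conj' (u x) * f x + u x * conj' (f x)
        = (2 * (δ : ℂ))⁻¹ * (q x - q (x - δ)) := by
      intro x
      rw [hu, hq]
      simp only [map_sub, map_add, map_mul, map_div₀, map_ofNat, Complex.conj_ofReal,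
        Complex.conj_I, sub_add_cancel]
      ring
    calc (∫ x, conj' (u x) * f x) + (∫ x, u x * conj' (f x))
        = ∫ x, (conj' (u x) * f x + u x * conj' (f x)) := (integral_add iuf iuf').symm
      _ = ∫ x, (2 * (δ : ℂ))⁻¹ * (q x - q (x - δ)) :=
          integral_congr_ae (Filter.Eventually.of_forall hpt)
      _ = (2 * (δ : ℂ))⁻¹ * ((∫ x, q x) - ∫ x : ℝ, q (x - δ)) := by
          rw [integral_const_mul _ _, integral_sub iq iqm]
      _ = 0 := by rw [S0]; simp
  -- conjugation identity
  have cj : ∀ g h : ℝ → ℂ, ∫ x, g x * conj' (h x) = conj' (∫ x, conj' (g x) * h x) := by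
    intro g h
    rw [← integral_conj]
    apply integral_congr_ae
    apply Filter.Eventually.of_forall
    intro x
    simp [map_mul, mul_comm]
  -- real part of ⟨u, f⟩ vanishes
  have hzre : (∫ x, conj' (u x) * f x).re = 0 := by
    have h2 := keyf
    rw [cj u f] at h2
    have h3 := Complex.add_conj (∫ x, conj' (u x) * f x)
    rw [h3] at h2
    have h4 : (2 : ℝ) * (∫ x, conj' (u x) * f x).re = 0 := by exact_mod_cast h2
    linarith
  -- expansion of the full first factor
  have hexp : ∫ x : ℝ, ‖(f (x + δ) - f (x - δ)) / (2 * (δ : ℂ)) - a * f x‖ ^ 2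
      = (∫ x, ‖u x‖ ^ 2) + a.re ^ 2 * (∫ x, ‖f x‖ ^ 2)
        - 2 * a.re * (∫ x, conj' (u x) * f x).re := by
    have hpt2 : ∀ x : ℝ, ‖(f (x + δ) - f (x - δ)) / (2 * (δ : ℂ)) - a * f x‖ ^ 2
        = ‖u x‖ ^ 2 + a.re ^ 2 * ‖f x‖ ^ 2 - 2 * a.re * (conj' (u x) * f x).re := by
      intro x
      have e1 : (f (x + δ) - f (x - δ)) / (2 * (δ : ℂ)) - a * f x
          = u x - (a.re : ℂ) * f x := by
        rw [hu]; linear_combination f x * Complex.re_add_im a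
      rw [e1, norm_sub_sq (𝕜 := ℂ)]
      have e2 : (inner (𝕜 := ℂ) (u x) ((a.re : ℂ) * f x))
          = (a.re : ℂ) * (conj' (u x) * f x) := by
        rw [RCLike.inner_apply]; ring
      rw [e2]
      simp only [RCLike.re_to_complex, Complex.re_ofReal_mul, norm_mul, Complex.norm_real,
        Real.norm_eq_abs]
      rw [mul_pow, _root_.sq_abs]
      ring
    calc ∫ x : ℝ, ‖(f (x + δ) - f (x - δ)) / (2 * (δ : ℂ)) - a * f x‖ ^ 2
        = ∫ x : ℝ, (‖u x‖ ^ 2 + a.re ^ 2 * ‖f x‖ ^ 2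
            - 2 * a.re * (conj' (u x) * f x).re) :=
          integral_congr_ae (Filter.Eventually.of_forall hpt2)
      _ = (∫ x, ‖u x‖ ^ 2) + a.re ^ 2 * (∫ x, ‖f x‖ ^ 2)
            - 2 * a.re * (∫ x, conj' (u x) * f x).re := by
          have iC : Integrable (fun x : ℝ => (conj' (u x) * f x).re) volume := by
            simpa using iuf.re
          have iA : Integrable (fun x : ℝ => ‖u x‖ ^ 2 + a.re ^ 2 * ‖f x‖ ^ 2) volume :=
            (aux_sq_int hu2).add ((aux_sq_int hf).const_mul _)
          have iB : Integrable (fun x : ℝ => 2 * a.re * (conj' (u x) * f x).re) volume :=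
            iC.const_mul _
          rw [integral_sub iA iB, integral_add (aux_sq_int hu2) ((aux_sq_int hf).const_mul _),
            integral_const_mul _ _, integral_const_mul _ _]
          have h5 := integral_re iuf
          simp only [RCLike.re_to_complex] at h5
          rw [h5]
  have hX : (∫ x, ‖u x‖ ^ 2)
      ≤ ∫ x : ℝ, ‖(f (x + δ) - f (x - δ)) / (2 * (δ : ℂ)) - a * f x‖ ^ 2 := by
    rw [hexp, hzre]
    have h1 : 0 ≤ a.re ^ 2 * (∫ x, ‖f x‖ ^ 2) :=
      mul_nonneg (sq_nonneg _) (integral_nonneg fun x => by positivity)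
    linarith
  have hY : (∫ x, ‖v x‖ ^ 2) ≤ ∫ x : ℝ, ‖(x : ℂ) * f x - b * f x‖ ^ 2 := by
    apply integral_mono (aux_sq_int hv2) (aux_sq_int (hxf.sub (hf.const_mul b)))
    intro x
    dsimp only
    rw [hv]
    simp only [Pi.sub_apply]
    have e : (x : ℂ) * f x - b * f x = ((x : ℂ) - b) * f x := by ring
    rw [e]
    simp only [norm_mul, mul_pow]
    have hle : ‖(x : ℂ) - (b.re : ℂ)‖ ^ 2 ≤ ‖(x : ℂ) - b‖ ^ 2 := by
      rw [Complex.sq_norm, Complex.sq_norm,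
        Complex.normSq_apply, Complex.normSq_apply]
      simp only [Complex.sub_re, Complex.sub_im, Complex.ofReal_re, Complex.ofReal_im]
      nlinarith [sq_nonneg b.im]
    exact mul_le_mul_of_nonneg_right hle (by positivity)
  -- the right-hand side integral
  have hI : (∫ x : ℝ, (f (x + δ) + f (x - δ)) / 2 * conj' (f x)) = (2⁻¹ : ℂ) * ∫ x, q x := by
    have e : ∀ x : ℝ, (f (x + δ) + f (x - δ)) / 2 * conj' (f x)
        = 2⁻¹ * (f (x + δ) * conj' (f x)) + 2⁻¹ * (f (x - δ) * conj' (f x)) := fun x => by ring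
    rw [integral_congr_ae (Filter.Eventually.of_forall e),
      integral_add (ifpf.const_mul _) (ifmf.const_mul _), integral_const_mul _ _,
      integral_const_mul _ _, S2]
    have hq2 : ∫ x, q x = (∫ x, conj' (f (x + δ)) * f x) + ∫ x, f (x + δ) * conj' (f x) := by
      rw [hq]; exact integral_add icfpf ifpf
    rw [hq2]
    ring
  -- put everything together
  have hzc : ∫ x, u x * conj' (v x) = conj' (∫ x, conj' (u x) * v x) := cj u v
  have hfin : (∫ x : ℝ, (f (x + δ) + f (x - δ)) / 2 * conj' (f x))
      = -((∫ x, conj' (u x) * v x) + conj' (∫ x, conj' (u x) * v x)) := by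
    rw [hzc] at key
    rw [hI]
    linear_combination key
  have hnorm : ‖∫ x : ℝ, (f (x + δ) + f (x - δ)) / 2 * conj' (f x)‖
      ≤ 2 * ‖∫ x, conj' (u x) * v x‖ := by
    rw [hfin, norm_neg]
    refine (norm_add_le _ _).trans ?_
    rw [RCLike.norm_conj]
    linarith
  have hcs := aux_cs hu2 hv2
  rw [ge_iff_le]
  have hun : (0:ℝ) ≤ ∫ x, ‖u x‖ ^ 2 := integral_nonneg fun x => by positivity
  have hvn : (0:ℝ) ≤ ∫ x, ‖v x‖ ^ 2 := integral_nonneg fun x => by positivity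
  calc (1 / 2 : ℝ) * ‖∫ x : ℝ, (f (x + δ) + f (x - δ)) / 2 * conj' (f x)‖
      ≤ (1 / 2 : ℝ) * (2 * ‖∫ x, conj' (u x) * v x‖) := by
        have : (0:ℝ) ≤ 1/2 := by norm_num
        exact mul_le_mul_of_nonneg_left hnorm this
    _ = ‖∫ x, conj' (u x) * v x‖ := by ring
    _ ≤ (∫ x, ‖u x‖ ^ 2) ^ ((1:ℝ)/2) * (∫ x, ‖v x‖ ^ 2) ^ ((1:ℝ)/2) := hcs
    _ ≤ (∫ x : ℝ, ‖(f (x + δ) - f (x - δ)) / (2 * (δ : ℂ)) - a * f x‖ ^ 2) ^ ((1 : ℝ) / 2)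
        * (∫ x : ℝ, ‖(x : ℂ) * f x - b * f x‖ ^ 2) ^ ((1 : ℝ) / 2) := by
        have h1 := Real.rpow_le_rpow hun hX (by norm_num : (0:ℝ) ≤ 1/2)
        have h2 := Real.rpow_le_rpow hvn hY (by norm_num : (0:ℝ) ≤ 1/2)
        exact mul_le_mul h1 h2 (Real.rpow_nonneg hvn _) (Real.rpow_nonneg (hun.trans hX) _)
end

section
/- For every square-summable complex sequence (f(n))_{n∈ℤ} with (n·f(n)) also square-summable, and all a, b ∈ ℂ: (Σ_n |f(n-1) - a f(n)|²)^{1/2} · (Σ_n |(n-b) f(n)|²)^{1/2} ≥ (1/2)|Σ_n f(n-1) · conj(f(n))|, provided f ≠ 0. -/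
open Complex

private lemma breit_memlp_of_sq {x : ℤ → ℂ} (hx : Summable fun n => ‖x n‖ ^ 2) :
    Memℓp x 2 := by
  apply memℓp_gen
  have h2 : ((2 : ENNReal).toReal) = (2 : ℝ) := by norm_num
  rw [h2]
  simpa [Real.rpow_two] using hx

private lemma breit_summable_mul {x y : ℤ → ℂ} (hx : Summable fun n => ‖x n‖ ^ 2)
    (hy : Summable fun n => ‖y n‖ ^ 2) : Summable fun n => x n * y n := by
  refine Summable.of_norm (Summable.of_nonneg_of_le (fun n => norm_nonneg _)
    (fun n => ?_) ((hx.add hy).div_const 2))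
  rw [norm_mul]
  nlinarith [norm_nonneg (x n), norm_nonneg (y n), sq_nonneg (‖x n‖ - ‖y n‖)]

private lemma breit_sq_summable_sub {x y : ℤ → ℂ} (hx : Summable fun n => ‖x n‖ ^ 2)
    (hy : Summable fun n => ‖y n‖ ^ 2) : Summable fun n => ‖x n - y n‖ ^ 2 := by
  refine Summable.of_nonneg_of_le (fun n => sq_nonneg _) (fun n => ?_)
    ((hx.add hy).mul_left 2)
  have h1 : ‖x n - y n‖ ^ 2 ≤ (‖x n‖ + ‖y n‖) ^ 2 :=
    pow_le_pow_left₀ (norm_nonneg _) (norm_sub_le _ _) 2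
  nlinarith [sq_nonneg (‖x n‖ - ‖y n‖)]

private lemma breit_cs {x y : ℤ → ℂ} (hx : Summable fun n => ‖x n‖ ^ 2)
    (hy : Summable fun n => ‖y n‖ ^ 2) :
    ‖∑' n, (starRingEnd ℂ) (x n) * y n‖ ≤
      (∑' n, ‖x n‖ ^ 2) ^ ((1 : ℝ) / 2) * (∑' n, ‖y n‖ ^ 2) ^ ((1 : ℝ) / 2) := by
  set X : lp (fun _ : ℤ => ℂ) 2 := ⟨x, breit_memlp_of_sq hx⟩ with hX
  set Y : lp (fun _ : ℤ => ℂ) 2 := ⟨y, breit_memlp_of_sq hy⟩ with hY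
  have h := norm_inner_le_norm (𝕜 := ℂ) X Y
  rw [lp.inner_eq_tsum] at h
  have h2 : ((2 : ENNReal).toReal) = (2 : ℝ) := by norm_num
  have hnX : ‖X‖ = (∑' n, ‖x n‖ ^ 2) ^ ((1 : ℝ) / 2) := by
    rw [lp.norm_eq_tsum_rpow (by norm_num) X, h2]
    congr 1
    exact tsum_congr fun n => Real.rpow_two _
  have hnY : ‖Y‖ = (∑' n, ‖y n‖ ^ 2) ^ ((1 : ℝ) / 2) := by
    rw [lp.norm_eq_tsum_rpow (by norm_num) Y, h2]
    congr 1
    exact tsum_congr fun n => Real.rpow_two _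
  rw [hnX, hnY] at h
  simp only [RCLike.inner_apply] at h
  refine le_trans (le_of_eq ?_) h
  congr 1
  exact tsum_congr fun n => mul_comm _ _

private lemma breit_expand_sq (x y c : ℂ) :
    ‖x - c * y‖ ^ 2 = ‖x‖ ^ 2 + ‖c‖ ^ 2 * ‖y‖ ^ 2
      - 2 * (c * ((starRingEnd ℂ) x * y)).re := by
  simp only [Complex.sq_norm, Complex.normSq_apply, Complex.sub_re,
    Complex.sub_im, Complex.mul_re, Complex.mul_im, Complex.conj_re, Complex.conj_im]
  ring

/-- The Breitenberger uncertainty principle on the circle, expressed in terms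
of Fourier coefficients: for a square-summable sequence `f : ℤ → ℂ` with
`(n f n)` square-summable and `f ≠ 0`,
`(Σ |f(n-1) - a f n|²)^{1/2} (Σ |(n-b) f n|²)^{1/2} ≥ (1/2)|Σ f(n-1) conj (f n)|`. -/
theorem breitenberger_fourier_coefficients
    (f : ℤ → ℂ)
    (hf : Summable fun n : ℤ => ‖f n‖ ^ 2)
    (hnf : Summable fun n : ℤ => ‖(n : ℂ) * f n‖ ^ 2)
    (hne : f ≠ 0) (a b : ℂ) :
    (∑' n : ℤ, ‖f (n - 1) - a * f n‖ ^ 2) ^ ((1 : ℝ) / 2)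
      * (∑' n : ℤ, ‖((n : ℂ) - b) * f n‖ ^ 2) ^ ((1 : ℝ) / 2)
    ≥ (1 / 2) * ‖∑' n : ℤ, f (n - 1) * (starRingEnd ℂ) (f n)‖ := by
  -- notation
  set t : ℤ → ℂ := fun n : ℤ => f (n - 1) * (starRingEnd ℂ) (f n) with ht_def
  -- basic square-summability facts
  have hfm1 : Summable fun n : ℤ => ‖f (n - 1)‖ ^ 2 :=
    ((Equiv.subRight (1 : ℤ)).summable_iff (f := fun n : ℤ => ‖f n‖ ^ 2)).2 hf
  have hfp1 : Summable fun n : ℤ => ‖f (n + 1)‖ ^ 2 :=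
    ((Equiv.addRight (1 : ℤ)).summable_iff (f := fun n : ℤ => ‖f n‖ ^ 2)).2 hf
  have hcf : Summable fun n : ℤ => ‖(starRingEnd ℂ) (f n)‖ ^ 2 := by
    simpa using hf
  have hcfm1 : Summable fun n : ℤ => ‖(starRingEnd ℂ) (f (n - 1))‖ ^ 2 := by
    simpa using hfm1
  have hcfp1 : Summable fun n : ℤ => ‖(starRingEnd ℂ) (f (n + 1))‖ ^ 2 := by
    simpa using hfp1
  have haf : Summable fun n : ℤ => ‖a * f n‖ ^ 2 := by
    simpa [norm_mul, mul_pow] using hf.mul_left (‖a‖ ^ 2)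
  have hcaf : Summable fun n : ℤ => ‖(starRingEnd ℂ) a * f n‖ ^ 2 := by
    simpa [norm_mul, mul_pow] using hf.mul_left (‖a‖ ^ 2)
  have hbf : Summable fun n : ℤ => ‖b * f n‖ ^ 2 := by
    simpa [norm_mul, mul_pow] using hf.mul_left (‖b‖ ^ 2)
  have hu : Summable fun n : ℤ => ‖f (n - 1) - a * f n‖ ^ 2 :=
    breit_sq_summable_sub hfm1 haf
  have hw : Summable fun n : ℤ => ‖f (n + 1) - (starRingEnd ℂ) a * f n‖ ^ 2 :=
    breit_sq_summable_sub hfp1 hcaf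
  have hv : Summable fun n : ℤ => ‖((n : ℂ) - b) * f n‖ ^ 2 := by
    simpa [sub_mul] using breit_sq_summable_sub hnf hbf
  have hnorm_v' : ∀ n : ℤ, ‖((n : ℂ) - (starRingEnd ℂ) b) * f n‖ = ‖((n : ℂ) - b) * f n‖ := by
    intro n
    rw [norm_mul, norm_mul]
    congr 1
    rw [show ((n : ℂ) - (starRingEnd ℂ) b) = (starRingEnd ℂ) ((n : ℂ) - b) by
      simp [map_sub]]
    exact RCLike.norm_conj _
  have hv' : Summable fun n : ℤ => ‖((n : ℂ) - (starRingEnd ℂ) b) * f n‖ ^ 2 :=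
    hv.congr fun n => by rw [← hnorm_v' n]
  -- summability of t
  have ht_sum : Summable t := breit_summable_mul hfm1 hcf
  -- cross sums
  have hr : Summable fun n : ℤ => (starRingEnd ℂ) (f (n - 1)) * f n :=
    breit_summable_mul hcfm1 hf
  have hr' : Summable fun n : ℤ => (starRingEnd ℂ) (f (n + 1)) * f n :=
    breit_summable_mul hcfp1 hf
  -- generic expansion of ∑ ‖x - c f‖²
  have key : ∀ (c : ℂ) (x : ℤ → ℂ), (Summable fun n => ‖x n‖ ^ 2) →
      (Summable fun n => (starRingEnd ℂ) (x n) * f n) →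
      ∑' n : ℤ, ‖x n - c * f n‖ ^ 2 =
        (∑' n : ℤ, ‖x n‖ ^ 2) + ‖c‖ ^ 2 * (∑' n : ℤ, ‖f n‖ ^ 2)
          - 2 * (c * ∑' n : ℤ, (starRingEnd ℂ) (x n) * f n).re := by
    intro c x hx hcross
    have hres : Summable fun n : ℤ => (c * ((starRingEnd ℂ) (x n) * f n)).re :=
      (Complex.hasSum_re (hcross.mul_left c).hasSum).summable
    have h2 : ∑' n : ℤ, (c * ((starRingEnd ℂ) (x n) * f n)).re
        = (c * ∑' n : ℤ, (starRingEnd ℂ) (x n) * f n).re := by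
      rw [← tsum_mul_left, Complex.re_tsum (hcross.mul_left c)]
    calc ∑' n : ℤ, ‖x n - c * f n‖ ^ 2
        = ∑' n : ℤ, (‖x n‖ ^ 2 + ‖c‖ ^ 2 * ‖f n‖ ^ 2
            - 2 * (c * ((starRingEnd ℂ) (x n) * f n)).re) :=
          tsum_congr fun n => breit_expand_sq _ _ _
      _ = (∑' n : ℤ, ‖x n‖ ^ 2) + ‖c‖ ^ 2 * (∑' n : ℤ, ‖f n‖ ^ 2)
          - 2 * (c * ∑' n : ℤ, (starRingEnd ℂ) (x n) * f n).re := by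
          rw [Summable.tsum_sub (hx.add (hf.mul_left _)) (hres.mul_left 2),
            Summable.tsum_add hx (hf.mul_left _), tsum_mul_left, tsum_mul_left, h2]
  -- reindexing of basic sums
  have e1 : ∑' n : ℤ, ‖f (n + 1)‖ ^ 2 = ∑' n : ℤ, ‖f n‖ ^ 2 :=
    (Equiv.addRight (1 : ℤ)).tsum_eq (fun n : ℤ => ‖f n‖ ^ 2)
  have e1' : ∑' n : ℤ, ‖f (n - 1)‖ ^ 2 = ∑' n : ℤ, ‖f n‖ ^ 2 :=
    (Equiv.subRight (1 : ℤ)).tsum_eq (fun n : ℤ => ‖f n‖ ^ 2)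
  -- the two cross sums agree after conjugation
  have hR' : ∑' n : ℤ, (starRingEnd ℂ) (f (n + 1)) * f n = ∑' n : ℤ, t n := by
    have step : ∀ n : ℤ, (starRingEnd ℂ) (f (n + 1)) * f n = t (n + 1) := by
      intro n
      simp only [ht_def, add_sub_cancel_right]
      ring
    rw [tsum_congr step]
    exact (Equiv.addRight (1 : ℤ)).tsum_eq t
  have hR : ∑' n : ℤ, (starRingEnd ℂ) (f (n - 1)) * f n = (starRingEnd ℂ) (∑' n : ℤ, t n) := by
    have step : ∀ n : ℤ, (starRingEnd ℂ) (f (n - 1)) * f n = (starRingEnd ℂ) (t n) := by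
      intro n
      simp only [ht_def, map_mul, Complex.conj_conj]
    rw [tsum_congr step]
    simp only [starRingEnd_apply]
    exact (tsum_star).symm
  -- the norm identity ∑‖w‖² = ∑‖u‖²
  have hPw : ∑' n : ℤ, ‖f (n + 1) - (starRingEnd ℂ) a * f n‖ ^ 2
      = ∑' n : ℤ, ‖f (n - 1) - a * f n‖ ^ 2 := by
    rw [key ((starRingEnd ℂ) a) (fun n => f (n + 1)) hfp1 hr',
      key a (fun n => f (n - 1)) hfm1 hr, hR', hR, e1, e1']
    have hna : ‖(starRingEnd ℂ) a‖ = ‖a‖ := RCLike.norm_conj a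
    have hre : ((starRingEnd ℂ) a * ∑' n : ℤ, t n).re
        = (a * (starRingEnd ℂ) (∑' n : ℤ, t n)).re := by
      conv_rhs => rw [show a * (starRingEnd ℂ) (∑' n : ℤ, t n)
          = (starRingEnd ℂ) ((starRingEnd ℂ) a * ∑' n : ℤ, t n) by
        rw [map_mul, Complex.conj_conj]]
      rw [Complex.conj_re]
    rw [hna, hre]
  -- telescoping identity
  set G : ℤ → ℂ := fun n : ℤ => ((n : ℂ) - b) * t n with hG_def
  have hyv : Summable fun n : ℤ => ‖((n : ℂ) - b) * (starRingEnd ℂ) (f n)‖ ^ 2 := by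
    have h : ∀ n : ℤ, ‖((n : ℂ) - b) * (starRingEnd ℂ) (f n)‖ ^ 2
        = ‖((n : ℂ) - b) * f n‖ ^ 2 := by
      intro n; rw [norm_mul, norm_mul, RCLike.norm_conj]
    exact hv.congr fun n => (h n).symm
  have hG : Summable G := by
    refine (breit_summable_mul hfm1 hyv).congr fun n => ?_
    simp only [hG_def, ht_def]
    ring
  have hGp : Summable fun n : ℤ => G (n + 1) :=
    ((Equiv.addRight (1 : ℤ)).summable_iff (f := G)).2 hG
  have htp : Summable fun n : ℤ => t (n + 1) :=
    ((Equiv.addRight (1 : ℤ)).summable_iff (f := t)).2 ht_sum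
  have eG : ∑' n : ℤ, G (n + 1) = ∑' n : ℤ, G n := (Equiv.addRight (1 : ℤ)).tsum_eq G
  have et : ∑' n : ℤ, t (n + 1) = ∑' n : ℤ, t n := (Equiv.addRight (1 : ℤ)).tsum_eq t
  -- the two inner-product sequences
  have hcv' : Summable fun n : ℤ =>
      ‖(starRingEnd ℂ) (((n : ℂ) - (starRingEnd ℂ) b) * f n)‖ ^ 2 :=
    hv'.congr fun n => by rw [RCLike.norm_conj]
  have hcw : Summable fun n : ℤ =>
      ‖(starRingEnd ℂ) (f (n + 1) - (starRingEnd ℂ) a * f n)‖ ^ 2 :=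
    hw.congr fun n => by rw [RCLike.norm_conj]
  have hA : Summable fun n : ℤ =>
      (starRingEnd ℂ) (((n : ℂ) - (starRingEnd ℂ) b) * f n) * (f (n - 1) - a * f n) :=
    breit_summable_mul hcv' hu
  have hB : Summable fun n : ℤ =>
      (starRingEnd ℂ) (f (n + 1) - (starRingEnd ℂ) a * f n) * (((n : ℂ) - b) * f n) :=
    breit_summable_mul hcw hv
  have hterm : ∀ n : ℤ,
      (starRingEnd ℂ) (((n : ℂ) - (starRingEnd ℂ) b) * f n) * (f (n - 1) - a * f n)
        - (starRingEnd ℂ) (f (n + 1) - (starRingEnd ℂ) a * f n) * (((n : ℂ) - b) * f n)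
      = G n - G (n + 1) + t (n + 1) := by
    intro n
    simp only [hG_def, ht_def, map_mul, map_sub, Complex.conj_conj, map_intCast,
      add_sub_cancel_right]
    push_cast
    ring
  have hmain : ∑' n : ℤ, t n =
      (∑' n : ℤ, (starRingEnd ℂ) (((n : ℂ) - (starRingEnd ℂ) b) * f n) * (f (n - 1) - a * f n))
      - ∑' n : ℤ, (starRingEnd ℂ) (f (n + 1) - (starRingEnd ℂ) a * f n) * (((n : ℂ) - b) * f n) := by
    rw [← Summable.tsum_sub hA hB, tsum_congr hterm, Summable.tsum_add (hG.sub hGp) htp,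
      Summable.tsum_sub hG hGp, eG, et]
    ring
  -- Cauchy–Schwarz bounds
  have ev : ∑' n : ℤ, ‖((n : ℂ) - (starRingEnd ℂ) b) * f n‖ ^ 2
      = ∑' n : ℤ, ‖((n : ℂ) - b) * f n‖ ^ 2 := tsum_congr fun n => by rw [hnorm_v' n]
  have c1 := breit_cs hv' hu
  rw [ev] at c1
  have c2 := breit_cs hw hv
  rw [hPw] at c2
  have hTnorm : ‖∑' n : ℤ, t n‖ ≤
      ‖∑' n : ℤ, (starRingEnd ℂ) (((n : ℂ) - (starRingEnd ℂ) b) * f n) * (f (n - 1) - a * f n)‖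
      + ‖∑' n : ℤ, (starRingEnd ℂ) (f (n + 1) - (starRingEnd ℂ) a * f n) * (((n : ℂ) - b) * f n)‖ := by
    rw [hmain]; exact norm_sub_le _ _
  have hcomm : (∑' n : ℤ, ‖((n : ℂ) - b) * f n‖ ^ 2) ^ ((1 : ℝ) / 2)
        * (∑' n : ℤ, ‖f (n - 1) - a * f n‖ ^ 2) ^ ((1 : ℝ) / 2)
      = (∑' n : ℤ, ‖f (n - 1) - a * f n‖ ^ 2) ^ ((1 : ℝ) / 2)
        * (∑' n : ℤ, ‖((n : ℂ) - b) * f n‖ ^ 2) ^ ((1 : ℝ) / 2) := mul_comm _ _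
  rw [ge_iff_le]
  linarith [c1, c2, hTnorm, hcomm]
end

section
/- For every f ∈ L²(-π, π) with f absolutely continuous and f' ∈ L²(-π,π), f(-π) = f(π), f ≠ 0, and all a, b ∈ ℂ: ‖(e^{iθ} - a)f‖₂ · ‖(d/dθ - b)f‖₂ ≥ (1/2)|⟨e^{iθ} f, f⟩|. -/
open MeasureTheory Real

lemma intervalIntegral_conj' {g : ℝ → ℂ} {a b : ℝ} :
    (∫ t in a..b, (starRingEnd ℂ) (g t)) = (starRingEnd ℂ) (∫ t in a..b, g t) := by
  simp [intervalIntegral, integral_conj, map_sub]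

lemma fubini_primitive {A B : ℝ} {φ ψ : ℝ → ℂ}
    (hφ : IntegrableOn φ (Set.Ioc A B)) (hψ : IntegrableOn ψ (Set.Ioc A B)) :
    (∫ s in Set.Ioc A B, φ s * ∫ t in Set.Ioc A s, ψ t)
      + (∫ s in Set.Ioc A B, (∫ t in Set.Ioc A s, φ t) * ψ s)
    = (∫ s in Set.Ioc A B, φ s) * (∫ t in Set.Ioc A B, ψ t) := by
  set μ := volume.restrict (Set.Ioc A B) with hμ
  have hprod : Integrable (fun p : ℝ × ℝ => φ p.1 * ψ p.2) (μ.prod μ) := hφ.mul_prod hψ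
  have hK : Integrable (fun p : ℝ × ℝ => if p.2 ≤ p.1 then φ p.1 * ψ p.2 else 0) (μ.prod μ) := by
    refine (hprod.indicator (measurableSet_le measurable_snd measurable_fst)).congr
      (Filter.Eventually.of_forall fun p => ?_)
    by_cases h : p.2 ≤ p.1 <;> simp [Set.indicator_apply, h]
  have hK' : Integrable (fun p : ℝ × ℝ => if p.1 ≤ p.2 then φ p.1 * ψ p.2 else 0) (μ.prod μ) := by
    refine (hprod.indicator (measurableSet_le measurable_fst measurable_snd)).congr
      (Filter.Eventually.of_forall fun p => ?_)
    by_cases h : p.1 ≤ p.2 <;> simp [Set.indicator_apply, h]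
  have hK'' : Integrable (fun p : ℝ × ℝ => if p.2 ≤ p.1 then φ p.2 * ψ p.1 else 0) (μ.prod μ) := by
    have hprod' : Integrable (fun p : ℝ × ℝ => φ p.2 * ψ p.1) (μ.prod μ) := by
      have := (hψ.mul_prod hφ : Integrable (fun p : ℝ × ℝ => ψ p.1 * φ p.2) (μ.prod μ))
      exact this.congr (Filter.Eventually.of_forall fun p => by ring_nf)
    refine (hprod'.indicator (measurableSet_le measurable_snd measurable_fst)).congr
      (Filter.Eventually.of_forall fun p => ?_)
    by_cases h : p.2 ≤ p.1 <;> simp [Set.indicator_apply, h]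
  -- inner integral identities
  have inner1 : ∀ s ∈ Set.Ioc A B,
      (∫ t, (if t ≤ s then φ s * ψ t else 0) ∂μ) = φ s * ∫ t in Set.Ioc A s, ψ t := by
    intro s hs
    have : (fun t => if t ≤ s then φ s * ψ t else 0)
        = (Set.Iic s).indicator (fun t => φ s * ψ t) := by
      funext t; by_cases h : t ≤ s <;> simp [Set.indicator_apply, h]
    rw [this, integral_indicator measurableSet_Iic, hμ,
      Measure.restrict_restrict measurableSet_Iic]
    have hset : Set.Iic s ∩ Set.Ioc A B = Set.Ioc A s := by
      rw [Set.inter_comm, Set.Ioc_inter_Iic, min_eq_right hs.2]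
    rw [hset, integral_const_mul]
  have inner2 : ∀ s ∈ Set.Ioc A B,
      (∫ t, (if t ≤ s then φ t * ψ s else 0) ∂μ) = (∫ t in Set.Ioc A s, φ t) * ψ s := by
    intro s hs
    have : (fun t => if t ≤ s then φ t * ψ s else 0)
        = (Set.Iic s).indicator (fun t => φ t * ψ s) := by
      funext t; by_cases h : t ≤ s <;> simp [Set.indicator_apply, h]
    rw [this, integral_indicator measurableSet_Iic, hμ,
      Measure.restrict_restrict measurableSet_Iic]
    have hset : Set.Iic s ∩ Set.Ioc A B = Set.Ioc A s := by
      rw [Set.inter_comm, Set.Ioc_inter_Iic, min_eq_right hs.2]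
    rw [hset, integral_mul_const]
  have e1 : (∫ s in Set.Ioc A B, φ s * ∫ t in Set.Ioc A s, ψ t)
      = ∫ p : ℝ × ℝ, (if p.2 ≤ p.1 then φ p.1 * ψ p.2 else 0) ∂(μ.prod μ) := by
    calc (∫ s in Set.Ioc A B, φ s * ∫ t in Set.Ioc A s, ψ t)
        = ∫ s, (∫ t, (if t ≤ s then φ s * ψ t else 0) ∂μ) ∂μ := by
          refine integral_congr_ae ?_
          filter_upwards [ae_restrict_mem measurableSet_Ioc] with s hs
          exact (inner1 s hs).symm
      _ = ∫ p : ℝ × ℝ, (if p.2 ≤ p.1 then φ p.1 * ψ p.2 else 0) ∂(μ.prod μ) :=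
          integral_integral (f := fun s t => if t ≤ s then φ s * ψ t else 0) hK
  have e2 : (∫ s in Set.Ioc A B, (∫ t in Set.Ioc A s, φ t) * ψ s)
      = ∫ p : ℝ × ℝ, (if p.1 ≤ p.2 then φ p.1 * ψ p.2 else 0) ∂(μ.prod μ) := by
    have swap := integral_integral_swap (f := fun s t => if t ≤ s then φ t * ψ s else 0) hK''
    calc (∫ s in Set.Ioc A B, (∫ t in Set.Ioc A s, φ t) * ψ s)
        = ∫ s, (∫ t, (if t ≤ s then φ t * ψ s else 0) ∂μ) ∂μ := by
          refine integral_congr_ae ?_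
          filter_upwards [ae_restrict_mem measurableSet_Ioc] with s hs
          exact (inner2 s hs).symm
      _ = ∫ t, (∫ s, (if t ≤ s then φ t * ψ s else 0) ∂μ) ∂μ := swap
      _ = ∫ p : ℝ × ℝ, (if p.1 ≤ p.2 then φ p.1 * ψ p.2 else 0) ∂(μ.prod μ) :=
          integral_integral (f := fun t s => if t ≤ s then φ t * ψ s else 0) hK'
  rw [e1, e2, ← integral_add hK hK']
  have hdiag : (μ.prod μ) {p : ℝ × ℝ | p.1 = p.2} = 0 := by
    have hms : MeasurableSet {p : ℝ × ℝ | p.1 = p.2} :=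
      measurableSet_eq_fun measurable_fst measurable_snd
    rw [Measure.prod_apply hms]
    have : ∀ x : ℝ, μ (Prod.mk x ⁻¹' {p : ℝ × ℝ | p.1 = p.2}) = 0 := by
      intro x
      have : (Prod.mk x ⁻¹' {p : ℝ × ℝ | p.1 = p.2}) = {x} := by
        ext y; simp [eq_comm]
      rw [this]
      exact le_antisymm ((Measure.restrict_apply_le _ _).trans_eq (Real.volume_singleton)) bot_le
    simp [this]
  have hae : ∀ᵐ p : ℝ × ℝ ∂(μ.prod μ), p.1 ≠ p.2 := by
    rw [ae_iff]
    simpa using hdiag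
  have : (fun p : ℝ × ℝ => (if p.2 ≤ p.1 then φ p.1 * ψ p.2 else 0)
        + (if p.1 ≤ p.2 then φ p.1 * ψ p.2 else 0))
      =ᵐ[μ.prod μ] fun p : ℝ × ℝ => φ p.1 * ψ p.2 := by
    filter_upwards [hae] with p hp
    rcases lt_or_gt_of_ne hp with h | h
    · simp [not_le.mpr h, h.le]
    · simp [not_le.mpr h, h.le]
  rw [integral_congr_ae this, integral_prod_mul]

lemma prod_rule {A B : ℝ} {g h g' h' : ℝ → ℂ}
    (hg' : IntegrableOn g' (Set.Ioc A B)) (hh' : IntegrableOn h' (Set.Ioc A B))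
    (hg : ∀ θ ∈ Set.Icc A B, g θ = g A + ∫ t in A..θ, g' t)
    (hh : ∀ θ ∈ Set.Icc A B, h θ = h A + ∫ t in A..θ, h' t)
    {θ : ℝ} (hθ : θ ∈ Set.Icc A B) :
    g θ * h θ = g A * h A + ∫ s in A..θ, (g' s * h s + g s * h' s) := by
  have hAB : A ≤ B := le_trans hθ.1 hθ.2
  have hg'θ : IntegrableOn g' (Set.Ioc A θ) := hg'.mono_set (Set.Ioc_subset_Ioc_right hθ.2)
  have hh'θ : IntegrableOn h' (Set.Ioc A θ) := hh'.mono_set (Set.Ioc_subset_Ioc_right hθ.2)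
  set Φ : ℝ → ℂ := fun s => ∫ t in Set.Ioc A s, g' t with hΦ
  set Ψ : ℝ → ℂ := fun s => ∫ t in Set.Ioc A s, h' t with hΨ
  -- continuity of primitives
  have hΦc : ContinuousOn Φ (Set.Icc A B) :=
    intervalIntegral.continuousOn_primitive ((integrableOn_Icc_iff_integrableOn_Ioc (by finiteness)).2 hg')
  have hΨc : ContinuousOn Ψ (Set.Icc A B) :=
    intervalIntegral.continuousOn_primitive ((integrableOn_Icc_iff_integrableOn_Ioc (by finiteness)).2 hh')
  -- bounds for primitives
  have hΦbd : ∀ s ∈ Set.Ioc A θ, ‖Φ s‖ ≤ ∫ t in Set.Ioc A B, ‖g' t‖ := by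
    intro s hs
    calc ‖Φ s‖ ≤ ∫ t in Set.Ioc A s, ‖g' t‖ := norm_integral_le_integral_norm _
      _ ≤ ∫ t in Set.Ioc A B, ‖g' t‖ := by
          refine setIntegral_mono_set hg'.norm ?_ ?_
          · exact Filter.Eventually.of_forall fun t => norm_nonneg _
          · exact HasSubset.Subset.eventuallyLE (Set.Ioc_subset_Ioc_right (hs.2.trans hθ.2))
  have hΨbd : ∀ s ∈ Set.Ioc A θ, ‖Ψ s‖ ≤ ∫ t in Set.Ioc A B, ‖h' t‖ := by
    intro s hs
    calc ‖Ψ s‖ ≤ ∫ t in Set.Ioc A s, ‖h' t‖ := norm_integral_le_integral_norm _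
      _ ≤ ∫ t in Set.Ioc A B, ‖h' t‖ := by
          refine setIntegral_mono_set hh'.norm ?_ ?_
          · exact Filter.Eventually.of_forall fun t => norm_nonneg _
          · exact HasSubset.Subset.eventuallyLE (Set.Ioc_subset_Ioc_right (hs.2.trans hθ.2))
  -- integrability of the cross terms
  have hΦm : AEStronglyMeasurable Φ (volume.restrict (Set.Ioc A θ)) :=
    (hΦc.mono (Set.Ioc_subset_Icc_self.trans (Set.Icc_subset_Icc_right hθ.2))).aestronglyMeasurable
      measurableSet_Ioc
  have hΨm : AEStronglyMeasurable Ψ (volume.restrict (Set.Ioc A θ)) :=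
    (hΨc.mono (Set.Ioc_subset_Icc_self.trans (Set.Icc_subset_Icc_right hθ.2))).aestronglyMeasurable
      measurableSet_Ioc
  have hg'Ψ : IntegrableOn (fun s => g' s * Ψ s) (Set.Ioc A θ) := by
    refine Integrable.mono' (hg'θ.norm.mul_const (∫ t in Set.Ioc A B, ‖h' t‖))
      (hg'θ.1.mul hΨm) ?_
    filter_upwards [ae_restrict_mem measurableSet_Ioc] with s hs
    rw [norm_mul]
    exact mul_le_mul_of_nonneg_left (hΨbd s hs) (norm_nonneg _)
  have hΦh' : IntegrableOn (fun s => Φ s * h' s) (Set.Ioc A θ) := by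
    refine Integrable.mono' ((hh'θ.norm.const_mul (∫ t in Set.Ioc A B, ‖g' t‖)))
      (hΦm.mul hh'θ.1) ?_
    filter_upwards [ae_restrict_mem measurableSet_Ioc] with s hs
    rw [norm_mul]
    exact mul_le_mul_of_nonneg_right (hΦbd s hs) (norm_nonneg _)
  -- rewrite the integrand
  have hrw : (∫ s in A..θ, (g' s * h s + g s * h' s))
      = ∫ s in Set.Ioc A θ, ((g' s * h A + g A * h' s) + (g' s * Ψ s + Φ s * h' s)) := by
    rw [intervalIntegral.integral_of_le hθ.1]
    refine setIntegral_congr_fun measurableSet_Ioc fun s hs => ?_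
    have hsI : s ∈ Set.Icc A B := ⟨hs.1.le, hs.2.trans hθ.2⟩
    rw [hg s hsI, hh s hsI, intervalIntegral.integral_of_le hs.1.le,
      intervalIntegral.integral_of_le hs.1.le]
    show g' s * (h A + Ψ s) + (g A + Φ s) * h' s
        = g' s * h A + g A * h' s + (g' s * Ψ s + Φ s * h' s)
    ring
  have hg'int : (∫ s in Set.Ioc A θ, g' s) = g θ - g A := by
    rw [← intervalIntegral.integral_of_le hθ.1, hg θ hθ]; ring
  have hh'int : (∫ s in Set.Ioc A θ, h' s) = h θ - h A := by
    rw [← intervalIntegral.integral_of_le hθ.1, hh θ hθ]; ring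
  have hfub := fubini_primitive hg'θ hh'θ
  have i1 : IntegrableOn (fun s => g' s * h A + g A * h' s) (Set.Ioc A θ) := by
    exact (hg'θ.mul_const (h A)).add (hh'θ.const_mul (g A))
  have i2 : IntegrableOn (fun s => g' s * Ψ s + Φ s * h' s) (Set.Ioc A θ) := by
    exact hg'Ψ.add hΦh'
  have split1 : (∫ s in Set.Ioc A θ, ((g' s * h A + g A * h' s) + (g' s * Ψ s + Φ s * h' s)))
      = (∫ s in Set.Ioc A θ, (g' s * h A + g A * h' s))
        + (∫ s in Set.Ioc A θ, (g' s * Ψ s + Φ s * h' s)) := integral_add i1 i2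
  have split2 : (∫ s in Set.Ioc A θ, (g' s * h A + g A * h' s))
      = (g θ - g A) * h A + g A * (h θ - h A) := by
    rw [integral_add (hg'θ.mul_const (h A)) (hh'θ.const_mul (g A)), integral_mul_const,
      integral_const_mul, hg'int, hh'int]
  have split3 : (∫ s in Set.Ioc A θ, (g' s * Ψ s + Φ s * h' s))
      = (g θ - g A) * (h θ - h A) := by
    rw [integral_add hg'Ψ hΦh', ← hg'int, ← hh'int, ← hfub]
  rw [hrw, split1, split2, split3]
  ring

lemma sq_int {μ : Measure ℝ} {g : ℝ → ℂ} (hg : MemLp g 2 μ) :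
    Integrable (fun x => ‖g x‖ ^ 2) μ := by
  have := hg.integrable_norm_rpow (by norm_num) (by norm_num)
  refine this.congr (Filter.Eventually.of_forall fun x => ?_)
  norm_num [Real.rpow_natCast]

lemma l2_mul_int {μ : Measure ℝ} {g h : ℝ → ℂ} (hg : MemLp g 2 μ) (hh : MemLp h 2 μ) :
    Integrable (fun x => g x * h x) μ := by
  have h1 : (1 : ENNReal) / 1 = 1 / 2 + 1 / 2 := by
    rw [ENNReal.div_add_div_same, one_div_one, one_add_one_eq_two]
    exact (ENNReal.div_self (two_ne_zero) (ENNReal.ofNat_ne_top)).symm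
  haveI : ENNReal.HolderTriple 2 2 1 := ⟨by rw [ENNReal.inv_two_add_inv_two, inv_one]⟩
  have := hh.smul (φ := g) (r := 1) hg
  rw [memLp_one_iff_integrable] at this
  exact this.congr (Filter.Eventually.of_forall fun x => by simp [smul_eq_mul])

lemma memL2_conj {μ : Measure ℝ} {g : ℝ → ℂ} (hg : MemLp g 2 μ) :
    MemLp (fun x => (starRingEnd ℂ) (g x)) 2 μ := by
  refine hg.of_le_mul (c := 1) (RCLike.continuous_conj.comp_aestronglyMeasurable hg.1) ?_
  exact Filter.Eventually.of_forall fun x => by simp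

lemma cs_aux {μ : Measure ℝ} {u v : ℝ → ℂ} (hu : MemLp u 2 μ) (hv : MemLp v 2 μ) :
    ‖∫ x, u x * (starRingEnd ℂ) (v x) ∂μ‖
      ≤ (∫ x, ‖u x‖ ^ 2 ∂μ) ^ ((1 : ℝ) / 2) * (∫ x, ‖v x‖ ^ 2 ∂μ) ^ ((1 : ℝ) / 2) := by
  have h2 : ENNReal.ofReal (2 : ℝ) = 2 := by
    rw [ENNReal.ofReal_ofNat]
  have key := integral_mul_norm_le_Lp_mul_Lq (μ := μ) (f := u) (g := v) (p := 2) (q := 2)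
    ⟨by norm_num, by norm_num, by norm_num⟩ (h2 ▸ hu) (h2 ▸ hv)
  calc ‖∫ x, u x * (starRingEnd ℂ) (v x) ∂μ‖
      ≤ ∫ x, ‖u x * (starRingEnd ℂ) (v x)‖ ∂μ := norm_integral_le_integral_norm _
    _ = ∫ x, ‖u x‖ * ‖v x‖ ∂μ := by
        refine integral_congr_ae (Filter.Eventually.of_forall fun x => ?_)
        simp [norm_mul]
    _ ≤ (∫ x, ‖u x‖ ^ (2:ℝ) ∂μ) ^ ((1:ℝ)/2) * (∫ x, ‖v x‖ ^ (2:ℝ) ∂μ) ^ ((1:ℝ)/2) := by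
        simpa using key
    _ = (∫ x, ‖u x‖ ^ 2 ∂μ) ^ ((1 : ℝ) / 2) * (∫ x, ‖v x‖ ^ 2 ∂μ) ^ ((1 : ℝ) / 2) := by
        norm_num [Real.rpow_natCast]

lemma norm_sub_real_smul_sq (z w : ℂ) (r : ℝ) :
    ‖z - (r:ℂ) * w‖^2 = ‖z‖^2 + r^2*‖w‖^2 - 2*r*((z * (starRingEnd ℂ) w).re) := by
  simp only [Complex.sq_norm]
  rw [Complex.normSq_sub, Complex.normSq_mul, Complex.normSq_ofReal]
  have h : z * (starRingEnd ℂ) ((r:ℂ) * w) = (r:ℂ) * (z * (starRingEnd ℂ) w) := by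
    rw [map_mul, Complex.conj_ofReal]; ring
  rw [h, Complex.re_ofReal_mul]
  ring

/-- The Breitenberger uncertainty principle on the circle: for `f ∈ L²(-π,π)`
absolutely continuous (given as the integral of its derivative `f'`), periodic,
with `f' ∈ L²(-π,π)` and `f ≠ 0`,
`‖(e^{iθ} - a) f‖₂ ‖(d/dθ - b) f‖₂ ≥ (1/2) |⟨e^{iθ} f, f⟩|`. -/
theorem breitenberger_uncertainty
    (f f' : ℝ → ℂ)
    (hAC : ∀ θ ∈ Set.Icc (-π) π, f θ = f (-π) + ∫ t in (-π)..θ, f' t)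
    (hf' : MemLp f' 2 (volume.restrict (Set.Ioc (-π) π)))
    (hper : f (-π) = f π)
    (hne : ∃ θ ∈ Set.Icc (-π) π, f θ ≠ 0)
    (a b : ℂ) :
    (∫ θ in (-π)..π, ‖Complex.exp (Complex.I * θ) * f θ - a * f θ‖ ^ 2) ^ ((1 : ℝ) / 2)
      * (∫ θ in (-π)..π, ‖f' θ - b * f θ‖ ^ 2) ^ ((1 : ℝ) / 2)
    ≥ (1 / 2) * ‖∫ θ in (-π)..π,
        Complex.exp (Complex.I * θ) * f θ * (starRingEnd ℂ) (f θ)‖ := by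
  have hpi : (-π : ℝ) ≤ π := by linarith [pi_pos]
  set S : Set ℝ := Set.Ioc (-π) π with hS
  set μ : Measure ℝ := volume.restrict S with hμdef
  haveI hfinμ : IsFiniteMeasure μ := by
    constructor
    rw [hμdef, Measure.restrict_apply_univ, hS, Real.volume_Ioc]
    exact ENNReal.ofReal_lt_top
  -- basic integrability of f'
  have hf'int : IntegrableOn f' S := hf'.integrable one_le_two
  -- continuity of f on Icc
  have hfc : ContinuousOn f (Set.Icc (-π) π) := by
    have hprim : ContinuousOn (fun x => ∫ t in Set.Ioc (-π) x, f' t) (Set.Icc (-π) π) :=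
      intervalIntegral.continuousOn_primitive ((integrableOn_Icc_iff_integrableOn_Ioc (by finiteness)).2 hf'int)
    have h2 : ContinuousOn (fun x => f (-π) + ∫ t in Set.Ioc (-π) x, f' t) (Set.Icc (-π) π) :=
      continuousOn_const.add hprim
    exact h2.congr fun θ hθ => by rw [hAC θ hθ, intervalIntegral.integral_of_le hθ.1]
  -- f ∈ L²
  have mf : MemLp f 2 μ := by
    obtain ⟨C, hC⟩ := isCompact_Icc.exists_bound_of_continuousOn hfc
    refine MemLp.of_bound ((hfc.mono Set.Ioc_subset_Icc_self).aestronglyMeasurable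
      measurableSet_Ioc) C ?_
    filter_upwards [ae_restrict_mem measurableSet_Ioc] with x hx
    exact hC x (Set.Ioc_subset_Icc_self hx)
  have mcf : MemLp (fun x => (starRingEnd ℂ) (f x)) 2 μ := memL2_conj mf
  have mcf' : MemLp (fun x => (starRingEnd ℂ) (f' x)) 2 μ := memL2_conj hf'
  have hconjf'int : IntegrableOn (fun t => (starRingEnd ℂ) (f' t)) S := mcf'.integrable one_le_two
  -- the exponential
  have hEcont : Continuous (fun t : ℝ => Complex.exp (Complex.I * t)) := by
    exact Complex.continuous_exp.comp (continuous_const.mul Complex.continuous_ofReal)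
  have hEnorm : ∀ t : ℝ, ‖Complex.exp (Complex.I * t)‖ = 1 := by
    intro t
    rw [mul_comm]
    exact Complex.norm_exp_ofReal_mul_I t
  have hEderiv : ∀ x : ℝ, HasDerivAt (fun t : ℝ => Complex.exp (Complex.I * t))
      (Complex.exp (Complex.I * x) * Complex.I) x := by
    intro x
    have h1 : HasDerivAt (fun t : ℝ => (Complex.I * (t : ℂ))) Complex.I x := by
      simpa using (Complex.ofRealCLM.hasDerivAt (x := x)).const_mul Complex.I
    simpa using h1.cexp
  have hErep : ∀ θ ∈ Set.Icc (-π) π, Complex.exp (Complex.I * (θ : ℝ))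
      = Complex.exp (Complex.I * ((-π : ℝ) : ℂ))
        + ∫ t in (-π)..θ, Complex.exp (Complex.I * t) * Complex.I := by
    intro θ hθ
    have h := intervalIntegral.integral_eq_sub_of_hasDerivAt
      (f := fun t : ℝ => Complex.exp (Complex.I * t))
      (f' := fun t : ℝ => Complex.exp (Complex.I * t) * Complex.I)
      (a := -π) (b := θ) (fun x _ => hEderiv x)
      ((hEcont.mul continuous_const).intervalIntegrable _ _)
    rw [h]; ring
  have hE'int : IntegrableOn (fun t : ℝ => Complex.exp (Complex.I * t) * Complex.I) S :=
    ((hEcont.mul continuous_const).integrableOn_Ioc)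
  -- representation of E * f
  have hEfrep : ∀ θ ∈ Set.Icc (-π) π, Complex.exp (Complex.I * (θ : ℝ)) * f θ
      = Complex.exp (Complex.I * ((-π : ℝ) : ℂ)) * f (-π)
        + ∫ t in (-π)..θ, (Complex.exp (Complex.I * t) * Complex.I * f t
            + Complex.exp (Complex.I * t) * f' t) := by
    intro θ hθ
    exact prod_rule hE'int hf'int hErep hAC hθ
  -- representation of conj f
  have hconjfrep : ∀ θ ∈ Set.Icc (-π) π, (starRingEnd ℂ) (f θ)
      = (starRingEnd ℂ) (f (-π)) + ∫ t in (-π)..θ, (starRingEnd ℂ) (f' t) := by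
    intro θ hθ
    rw [hAC θ hθ, map_add, intervalIntegral_conj']
  -- more MemLp facts
  have mEf : MemLp (fun x : ℝ => Complex.exp (Complex.I * x) * f x) 2 μ := by
    refine mf.of_le_mul (c := 1) (hEcont.aestronglyMeasurable.mul mf.1) ?_
    refine Filter.Eventually.of_forall fun x => ?_
    rw [norm_mul, hEnorm, one_mul]
  have mEf' : MemLp (fun x : ℝ => Complex.exp (Complex.I * x) * f' x) 2 μ := by
    refine hf'.of_le_mul (c := 1) (hEcont.aestronglyMeasurable.mul hf'.1) ?_
    refine Filter.Eventually.of_forall fun x => ?_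
    rw [norm_mul, hEnorm, one_mul]
  -- integrable monomials
  have m0 : Integrable (fun x : ℝ => Complex.exp (Complex.I * x) * f x * (starRingEnd ℂ) (f x)) μ :=
    l2_mul_int mEf mcf
  have m1 : Integrable (fun x : ℝ => Complex.exp (Complex.I * x) * f x * (starRingEnd ℂ) (f' x)) μ :=
    l2_mul_int mEf mcf'
  have m2 : Integrable (fun x : ℝ => Complex.exp (Complex.I * x) * f' x * (starRingEnd ℂ) (f x)) μ :=
    l2_mul_int mEf' mcf
  have m3 : Integrable (fun x => f x * (starRingEnd ℂ) (f' x)) μ := l2_mul_int mf mcf'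
  have m4 : Integrable (fun x => f' x * (starRingEnd ℂ) (f x)) μ := l2_mul_int hf' mcf
  have m5 : Integrable (fun x => f x * (starRingEnd ℂ) (f x)) μ := l2_mul_int mf mcf
  -- identity (0)
  have hid0 : (∫ x in S, f' x * (starRingEnd ℂ) (f x))
      + (∫ x in S, f x * (starRingEnd ℂ) (f' x)) = 0 := by
    have h := prod_rule hf'int hconjf'int hAC hconjfrep (θ := π) ⟨hpi, le_refl π⟩
    rw [hper] at h
    have h2 := left_eq_add.mp h.symm.symm
    rw [intervalIntegral.integral_of_le hpi, integral_add m4 m3] at h2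
    exact h2
  -- identity (1)
  have hid1 : Complex.I * (∫ x in S, Complex.exp (Complex.I * x) * f x * (starRingEnd ℂ) (f x))
      + (∫ x in S, Complex.exp (Complex.I * x) * f' x * (starRingEnd ℂ) (f x))
      + (∫ x in S, Complex.exp (Complex.I * x) * f x * (starRingEnd ℂ) (f' x)) = 0 := by
    have hg'2 : IntegrableOn (fun t : ℝ => Complex.exp (Complex.I * t) * Complex.I * f t
        + Complex.exp (Complex.I * t) * f' t) S := by
      refine Integrable.add ?_ ?_
      · refine (integrableOn_Icc_iff_integrableOn_Ioc (by finiteness)).1 ?_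
        exact (((hEcont.mul continuous_const).continuousOn).mul hfc).integrableOn_Icc
      · refine Integrable.mono' hf'int.norm (hEcont.aestronglyMeasurable.mul hf'int.1) ?_
        refine Filter.Eventually.of_forall fun x => ?_
        rw [norm_mul, hEnorm, one_mul]
    have h := prod_rule hg'2 hconjf'int hEfrep hconjfrep (θ := π) ⟨hpi, le_refl π⟩
    have hEpi : Complex.exp (Complex.I * ((π : ℝ) : ℂ)) = -1 := by
      rw [mul_comm]; exact Complex.exp_pi_mul_I
    have hEmpi : Complex.exp (Complex.I * ((-π : ℝ) : ℂ)) = -1 := by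
      have : (Complex.I * ((-π : ℝ) : ℂ)) = -((π : ℝ) * Complex.I) := by push_cast; ring
      rw [this, Complex.exp_neg, Complex.exp_pi_mul_I]
      norm_num
    rw [hper, hEpi, hEmpi] at h
    have h2 := left_eq_add.mp h.symm.symm
    have hintg : (fun s : ℝ => (Complex.exp (Complex.I * s) * Complex.I * f s
          + Complex.exp (Complex.I * s) * f' s) * (starRingEnd ℂ) (f s)
          + Complex.exp (Complex.I * s) * f s * (starRingEnd ℂ) (f' s))
        = fun s : ℝ => Complex.I * (Complex.exp (Complex.I * s) * f s * (starRingEnd ℂ) (f s))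
          + (Complex.exp (Complex.I * s) * f' s * (starRingEnd ℂ) (f s)
          + Complex.exp (Complex.I * s) * f s * (starRingEnd ℂ) (f' s)) := by
      funext s; ring
    have m0I : Integrable (fun x : ℝ => Complex.I
        * (Complex.exp (Complex.I * x) * f x * (starRingEnd ℂ) (f x))) μ := by
      exact m0.const_mul Complex.I
    have m21 : Integrable (fun x : ℝ => Complex.exp (Complex.I * x) * f' x * (starRingEnd ℂ) (f x)
        + Complex.exp (Complex.I * x) * f x * (starRingEnd ℂ) (f' x)) μ := by
      exact m2.add m1
    rw [intervalIntegral.integral_of_le hpi, hintg,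
      integral_add m0I m21, integral_add m2 m1,
      integral_const_mul] at h2
    linear_combination h2
    -- decomposition of b
  set b₀ : ℂ := (b.im : ℂ) * Complex.I with hb₀
  have hcb₀ : (starRingEnd ℂ) b₀ = -b₀ := by
    rw [hb₀, map_mul, Complex.conj_ofReal, Complex.conj_I]; ring
  -- MemLp of the shifted functions
  have mu : MemLp (fun x : ℝ => Complex.exp (Complex.I * x) * f x - a * f x) 2 μ := by
    exact mEf.sub (mf.const_mul a)
  have mv0 : MemLp (fun x : ℝ => f' x - b₀ * f x) 2 μ := by
    exact hf'.sub (mf.const_mul b₀)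
  have mvb : MemLp (fun x : ℝ => f' x - b * f x) 2 μ := by
    exact hf'.sub (mf.const_mul b)
  have mcEf : MemLp (fun x : ℝ => (starRingEnd ℂ) (Complex.exp (Complex.I * x)) * f x) 2 μ := by
    refine mf.of_le_mul (c := 1)
      (((RCLike.continuous_conj.comp hEcont).aestronglyMeasurable).mul mf.1) ?_
    refine Filter.Eventually.of_forall fun x => ?_
    rw [norm_mul, RCLike.norm_conj, hEnorm, one_mul]
  have mu2 : MemLp (fun x : ℝ => (starRingEnd ℂ) (Complex.exp (Complex.I * x)) * f x
      - (starRingEnd ℂ) a * f x) 2 μ := by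
    exact mcEf.sub (mf.const_mul _)
  -- real part facts
  have hS2conj : (∫ x in S, f x * (starRingEnd ℂ) (f' x))
      = (starRingEnd ℂ) (∫ x in S, f' x * (starRingEnd ℂ) (f x)) := by
    have hfun : (fun x : ℝ => f x * (starRingEnd ℂ) (f' x))
        = fun x : ℝ => (starRingEnd ℂ) (f' x * (starRingEnd ℂ) (f x)) := funext fun x => by
      rw [map_mul, Complex.conj_conj]; ring
    rw [hfun, integral_conj]
  have hS1re : (∫ x in S, f' x * (starRingEnd ℂ) (f x)).re = 0 := by
    have h := hid0
    rw [hS2conj, Complex.add_conj] at h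
    have h2 : (2:ℝ) * (∫ x in S, f' x * (starRingEnd ℂ) (f x)).re = 0 := by exact_mod_cast h
    linarith
  have hNim : (∫ x in S, f x * (starRingEnd ℂ) (f x)).im = 0 := by
    have h := integral_im (μ := μ) m5
    simp only [RCLike.im_to_complex] at h
    rw [← h]
    have hz : (fun x : ℝ => (f x * (starRingEnd ℂ) (f x)).im) = fun _ => (0:ℝ) :=
      funext fun x => by rw [Complex.mul_conj]; exact Complex.ofReal_im _
    rw [hz, integral_zero]
  have m5b : Integrable (fun x : ℝ => b₀ * (f x * (starRingEnd ℂ) (f x))) μ := by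
    exact m5.const_mul b₀
  have hv0cf : Integrable (fun x : ℝ => (f' x - b₀ * f x) * (starRingEnd ℂ) (f x)) μ :=
    l2_mul_int mv0 mcf
  have hre0 : (∫ x in S, ((f' x - b₀ * f x) * (starRingEnd ℂ) (f x)).re) = 0 := by
    have hi := integral_re (μ := μ) hv0cf
    simp only [RCLike.re_to_complex] at hi
    rw [hi]
    have hexp : (∫ x in S, (f' x - b₀ * f x) * (starRingEnd ℂ) (f x))
        = (∫ x in S, f' x * (starRingEnd ℂ) (f x))
          - b₀ * (∫ x in S, f x * (starRingEnd ℂ) (f x)) := by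
      rw [show (fun x : ℝ => (f' x - b₀ * f x) * (starRingEnd ℂ) (f x))
          = fun x : ℝ => f' x * (starRingEnd ℂ) (f x) - b₀ * (f x * (starRingEnd ℂ) (f x))
        from funext fun x => by ring]
      rw [integral_sub m4 m5b, integral_const_mul]
    rw [hexp, Complex.sub_re, hS1re, Complex.mul_re, hNim, hb₀]
    simp
  -- monotonicity in b
  have hmono : (∫ x in S, ‖f' x - b₀ * f x‖^2) ≤ ∫ x in S, ‖f' x - b * f x‖^2 := by
    have hpt : ∀ x : ℝ, ‖f' x - b * f x‖^2
        = (‖f' x - b₀ * f x‖^2 + b.re^2 * ‖f x‖^2)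
          - 2 * b.re * ((f' x - b₀ * f x) * (starRingEnd ℂ) (f x)).re := by
      intro x
      have hb : b = (b.re : ℂ) + b₀ := by rw [hb₀]; exact (Complex.re_add_im b).symm
      have h1 : f' x - b * f x = (f' x - b₀ * f x) - (b.re : ℂ) * f x := by
        conv_lhs => rw [hb]
        ring
      rw [h1, norm_sub_real_smul_sq]
    have i1 : Integrable (fun x : ℝ => ‖f' x - b₀ * f x‖^2 + b.re^2 * ‖f x‖^2) μ := by
      exact (sq_int mv0).add ((sq_int mf).const_mul _)
    have i2 : Integrable (fun x : ℝ => 2 * b.re * ((f' x - b₀ * f x) * (starRingEnd ℂ) (f x)).re) μ := by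
      have := hv0cf.re
      simp only [RCLike.re_to_complex] at this
      exact this.const_mul _
    have hsp : (∫ x in S, ‖f' x - b * f x‖^2)
        = (∫ x in S, (‖f' x - b₀ * f x‖^2 + b.re^2 * ‖f x‖^2))
          - ∫ x in S, 2 * b.re * ((f' x - b₀ * f x) * (starRingEnd ℂ) (f x)).re := by
      rw [show (fun x : ℝ => ‖f' x - b * f x‖^2)
          = fun x : ℝ => (‖f' x - b₀ * f x‖^2 + b.re^2 * ‖f x‖^2)
            - 2 * b.re * ((f' x - b₀ * f x) * (starRingEnd ℂ) (f x)).re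
        from funext fun x => hpt x]
      exact integral_sub i1 i2
    have hsq : (0:ℝ) ≤ ∫ x in S, ‖f x‖^2 := integral_nonneg fun x => by positivity
    rw [hsp, integral_add (sq_int mv0) ((sq_int mf).const_mul _), integral_const_mul,
      integral_const_mul, hre0]
    nlinarith [sq_nonneg b.re]
  -- expansions of the two inner products
  have m0b : Integrable (fun x : ℝ => b₀ * (Complex.exp (Complex.I * x) * f x
      * (starRingEnd ℂ) (f x))) μ := by exact m0.const_mul b₀
  have m3a : Integrable (fun x : ℝ => a * (f x * (starRingEnd ℂ) (f' x))) μ := by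
    exact m3.const_mul a
  have m4a : Integrable (fun x : ℝ => a * (f' x * (starRingEnd ℂ) (f x))) μ := by
    exact m4.const_mul a
  have m5ab : Integrable (fun x : ℝ => (a * b₀) * (f x * (starRingEnd ℂ) (f x))) μ := by
    exact m5.const_mul _
  have iP1 : Integrable (fun x : ℝ => Complex.exp (Complex.I * x) * f x * (starRingEnd ℂ) (f' x)
      + b₀ * (Complex.exp (Complex.I * x) * f x * (starRingEnd ℂ) (f x))) μ := by
    exact m1.add m0b
  have iP2 : Integrable (fun x : ℝ => a * (f x * (starRingEnd ℂ) (f' x))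
      + (a * b₀) * (f x * (starRingEnd ℂ) (f x))) μ := by
    exact m3a.add m5ab
  have hPexp : (∫ x in S, (Complex.exp (Complex.I * x) * f x - a * f x)
        * (starRingEnd ℂ) (f' x - b₀ * f x))
      = (∫ x in S, Complex.exp (Complex.I * x) * f x * (starRingEnd ℂ) (f' x))
        + b₀ * (∫ x in S, Complex.exp (Complex.I * x) * f x * (starRingEnd ℂ) (f x))
        - (a * (∫ x in S, f x * (starRingEnd ℂ) (f' x))
          + (a * b₀) * (∫ x in S, f x * (starRingEnd ℂ) (f x))) := by
    rw [show (fun x : ℝ => (Complex.exp (Complex.I * x) * f x - a * f x)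
          * (starRingEnd ℂ) (f' x - b₀ * f x))
        = fun x : ℝ => (Complex.exp (Complex.I * x) * f x * (starRingEnd ℂ) (f' x)
            + b₀ * (Complex.exp (Complex.I * x) * f x * (starRingEnd ℂ) (f x)))
          - (a * (f x * (starRingEnd ℂ) (f' x))
            + (a * b₀) * (f x * (starRingEnd ℂ) (f x)))
      from funext fun x => by rw [map_sub, map_mul, hcb₀]; ring]
    rw [integral_sub iP1 iP2, integral_add m1 m0b, integral_add m3a m5ab,
      integral_const_mul, integral_const_mul, integral_const_mul]
  have m0b' : Integrable (fun x : ℝ => b₀ * (Complex.exp (Complex.I * x) * f x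
      * (starRingEnd ℂ) (f x))) μ := m0b
  have iQ1 : Integrable (fun x : ℝ => Complex.exp (Complex.I * x) * f' x * (starRingEnd ℂ) (f x)
      + (a * b₀) * (f x * (starRingEnd ℂ) (f x))) μ := by
    exact m2.add m5ab
  have iQ2 : Integrable (fun x : ℝ => a * (f' x * (starRingEnd ℂ) (f x))
      + b₀ * (Complex.exp (Complex.I * x) * f x * (starRingEnd ℂ) (f x))) μ := by
    exact m4a.add m0b
  have hQexp : (∫ x in S, (f' x - b₀ * f x)
        * (starRingEnd ℂ) ((starRingEnd ℂ) (Complex.exp (Complex.I * x)) * f x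
          - (starRingEnd ℂ) a * f x))
      = (∫ x in S, Complex.exp (Complex.I * x) * f' x * (starRingEnd ℂ) (f x))
        + (a * b₀) * (∫ x in S, f x * (starRingEnd ℂ) (f x))
        - (a * (∫ x in S, f' x * (starRingEnd ℂ) (f x))
          + b₀ * (∫ x in S, Complex.exp (Complex.I * x) * f x * (starRingEnd ℂ) (f x))) := by
    rw [show (fun x : ℝ => (f' x - b₀ * f x)
          * (starRingEnd ℂ) ((starRingEnd ℂ) (Complex.exp (Complex.I * x)) * f x
            - (starRingEnd ℂ) a * f x))
        = fun x : ℝ => (Complex.exp (Complex.I * x) * f' x * (starRingEnd ℂ) (f x)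
            + (a * b₀) * (f x * (starRingEnd ℂ) (f x)))
          - (a * (f' x * (starRingEnd ℂ) (f x))
            + b₀ * (Complex.exp (Complex.I * x) * f x * (starRingEnd ℂ) (f x)))
      from funext fun x => by
        rw [map_sub, map_mul, map_mul, Complex.conj_conj, Complex.conj_conj]; ring]
    rw [integral_sub iQ1 iQ2, integral_add m2 m5ab, integral_add m4a m0b,
      integral_const_mul, integral_const_mul, integral_const_mul]
  -- the commutator identity
  have hT0eq : (∫ x in S, Complex.exp (Complex.I * x) * f x * (starRingEnd ℂ) (f x))
      = Complex.I * ((∫ x in S, (Complex.exp (Complex.I * x) * f x - a * f x)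
            * (starRingEnd ℂ) (f' x - b₀ * f x))
          + (∫ x in S, (f' x - b₀ * f x)
            * (starRingEnd ℂ) ((starRingEnd ℂ) (Complex.exp (Complex.I * x)) * f x
              - (starRingEnd ℂ) a * f x))) := by
    rw [hPexp, hQexp]
    linear_combination (-Complex.I) * hid1 + (a * Complex.I) * hid0
      + (∫ x in S, Complex.exp (Complex.I * ↑x) * f x * (starRingEnd ℂ) (f x)) * Complex.I_sq
  -- Cauchy-Schwarz estimates
  have hPle := cs_aux (μ := μ) mu mv0
  have hQle := cs_aux (μ := μ) mv0 mu2
  have hueq : (∫ x in S, ‖(starRingEnd ℂ) (Complex.exp (Complex.I * x)) * f x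
        - (starRingEnd ℂ) a * f x‖^2)
      = ∫ x in S, ‖Complex.exp (Complex.I * x) * f x - a * f x‖^2 := by
    have hfun : (fun x : ℝ => ‖(starRingEnd ℂ) (Complex.exp (Complex.I * x)) * f x
          - (starRingEnd ℂ) a * f x‖^2)
        = fun x : ℝ => ‖Complex.exp (Complex.I * x) * f x - a * f x‖^2 := funext fun x => by
      rw [show (starRingEnd ℂ) (Complex.exp (Complex.I * x)) * f x - (starRingEnd ℂ) a * f x
          = (starRingEnd ℂ) (Complex.exp (Complex.I * x) - a) * f x from by rw [map_sub]; ring,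
        show Complex.exp (Complex.I * x) * f x - a * f x
          = (Complex.exp (Complex.I * x) - a) * f x from by ring,
        norm_mul, norm_mul, RCLike.norm_conj]
    rw [hfun]
  rw [hueq] at hQle
  -- numbers
  have h0u : (0:ℝ) ≤ ∫ x in S, ‖Complex.exp (Complex.I * x) * f x - a * f x‖^2 :=
    integral_nonneg fun x => by positivity
  have h0v : (0:ℝ) ≤ ∫ x in S, ‖f' x - b₀ * f x‖^2 :=
    integral_nonneg fun x => by positivity
  have hfinal : (∫ x in S, ‖Complex.exp (Complex.I * x) * f x - a * f x‖^2) ^ ((1:ℝ)/2)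
      * (∫ x in S, ‖f' x - b * f x‖^2) ^ ((1:ℝ)/2)
      ≥ 1/2 * ‖∫ x in S, Complex.exp (Complex.I * x) * f x * (starRingEnd ℂ) (f x)‖ := by
    have hnorm : ‖∫ x in S, Complex.exp (Complex.I * x) * f x * (starRingEnd ℂ) (f x)‖
        ≤ 2 * ((∫ x in S, ‖Complex.exp (Complex.I * x) * f x - a * f x‖^2) ^ ((1:ℝ)/2)
          * (∫ x in S, ‖f' x - b₀ * f x‖^2) ^ ((1:ℝ)/2)) := by
      rw [hT0eq, norm_mul, Complex.norm_I, one_mul]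
      calc ‖_ + _‖ ≤ _ := norm_add_le _ _
        _ ≤ 2 * ((∫ x in S, ‖Complex.exp (Complex.I * x) * f x - a * f x‖^2) ^ ((1:ℝ)/2)
            * (∫ x in S, ‖f' x - b₀ * f x‖^2) ^ ((1:ℝ)/2)) := by
          have := hPle
          have := hQle
          nlinarith [hPle, hQle]
    have hstep : (∫ x in S, ‖f' x - b₀ * f x‖^2) ^ ((1:ℝ)/2)
        ≤ (∫ x in S, ‖f' x - b * f x‖^2) ^ ((1:ℝ)/2) :=
      Real.rpow_le_rpow h0v hmono (by norm_num)
    have hu_nn : (0:ℝ) ≤ (∫ x in S, ‖Complex.exp (Complex.I * x) * f x - a * f x‖^2) ^ ((1:ℝ)/2) :=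
      Real.rpow_nonneg h0u _
    nlinarith [mul_le_mul_of_nonneg_left hstep hu_nn]
  simp only [ge_iff_le, intervalIntegral.integral_of_le hpi]
  rw [← hS]
  exact hfinal
end

section
/- For every f ∈ L²(-π,π) with f absolutely continuous, periodic (f(-π)=f(π)), f' ∈ L², f ≠ 0, and all a, b ∈ ℂ: ‖(sin θ - a)f‖₂ · ‖(d/dθ - b)f‖₂ ≥ (1/2)|⟨(cos θ)f, f⟩|. -/
open MeasureTheory Real
open Set

lemma my_integrable_mul_of_continuousOn {a b : ℝ} {p : ℝ → ℂ}
    (hp : IntegrableOn p (Ioc a b)) {g : ℝ → ℂ} (hg : ContinuousOn g (Icc a b)) :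
    IntegrableOn (fun x => p x * g x) (Ioc a b) := by
  obtain ⟨C, hC⟩ := (isCompact_Icc (a := a) (b := b)).exists_bound_of_continuousOn hg
  apply Integrable.mono' (hp.norm.const_mul C)
  · exact hp.1.mul ((hg.mono Ioc_subset_Icc_self).aestronglyMeasurable measurableSet_Ioc)
  · filter_upwards [ae_restrict_mem measurableSet_Ioc] with x hx
    rw [norm_mul, mul_comm C]
    gcongr
    exact hC x (Ioc_subset_Icc_self hx)

lemma my_integrable_mul_of_continuousOn' {a b : ℝ} {p : ℝ → ℂ}
    (hp : IntegrableOn p (Ioc a b)) {g : ℝ → ℂ} (hg : ContinuousOn g (Icc a b)) :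
    IntegrableOn (fun x => g x * p x) (Ioc a b) := by
  simpa [mul_comm] using my_integrable_mul_of_continuousOn hp hg

lemma my_parts_aux {a b : ℝ} (hab : a ≤ b) {p q : ℝ → ℂ}
    (hp : IntegrableOn p (Ioc a b)) (hq : IntegrableOn q (Ioc a b)) :
    (∫ x in Ioc a b, p x * (∫ t in a..x, q t))
      + ∫ x in Ioc a b, (∫ t in a..x, p t) * q x
      = (∫ x in Ioc a b, p x) * ∫ x in Ioc a b, q x := by
  set μ := volume.restrict (Ioc a b) with hμ
  set k : ℝ × ℝ → ℂ := fun z => if z.2 ≤ z.1 then p z.1 * q z.2 else 0 with hk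
  have hint : Integrable k (μ.prod μ) := by
    have h1 : Integrable (fun z : ℝ × ℝ => p z.1 * q z.2) (μ.prod μ) := hp.mul_prod hq
    have hke : k = {z : ℝ × ℝ | z.2 ≤ z.1}.indicator (fun z => p z.1 * q z.2) := by
      funext z; by_cases h : z.2 ≤ z.1 <;> simp [hk, h, Set.indicator]
    rw [hke]
    exact h1.indicator (measurableSet_le measurable_snd measurable_fst)
  have h2 : ∀ x ∈ Ioc a b, (∫ y, k (x, y) ∂μ) = p x * ∫ t in a..x, q t := by
    intro x hx
    have he : (fun y => k (x, y)) = (Set.Iic x).indicator (fun y => p x * q y) := by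
      funext y; by_cases h : y ≤ x <;> simp [hk, h, Set.indicator]
    rw [he, integral_indicator measurableSet_Iic, hμ,
      Measure.restrict_restrict measurableSet_Iic]
    have hs : Set.Iic x ∩ Set.Ioc a b = Set.Ioc a x := by
      ext t
      simp only [Set.mem_inter_iff, Set.mem_Iic, Set.mem_Ioc]
      exact ⟨fun ⟨h1, h2, h3⟩ => ⟨h2, h1⟩, fun ⟨h1, h2⟩ => ⟨h2, h1, h2.trans hx.2⟩⟩
    rw [hs, intervalIntegral.integral_of_le hx.1.le, MeasureTheory.integral_const_mul]
  have h3 : ∀ y ∈ Ioc a b, (∫ x, k (x, y) ∂μ)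
      = ((∫ x in Ioc a b, p x) - ∫ t in a..y, p t) * q y := by
    intro y hy
    have he : (fun x => k (x, y)) = (Set.Ici y).indicator (fun x => p x * q y) := by
      funext x; by_cases h : y ≤ x <;> simp [hk, h, Set.indicator]
    rw [he, integral_indicator measurableSet_Ici, hμ,
      Measure.restrict_restrict measurableSet_Ici]
    have hs : Set.Ici y ∩ Set.Ioc a b = Set.Icc y b := by
      ext t
      simp only [Set.mem_inter_iff, Set.mem_Ici, Set.mem_Icc, Set.mem_Ioc]
      exact ⟨fun ⟨h1, _, h3⟩ => ⟨h1, h3⟩, fun ⟨h1, h2⟩ => ⟨h1, hy.1.trans_le h1, h2⟩⟩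
    rw [hs, MeasureTheory.integral_Icc_eq_integral_Ioc, MeasureTheory.integral_mul_const,
      ← intervalIntegral.integral_of_le hy.2]
    congr 1
    have h1 : IntervalIntegrable p volume a b :=
      (intervalIntegrable_iff_integrableOn_Ioc_of_le hab).2 hp
    have h2 : IntervalIntegrable p volume a y :=
      (intervalIntegrable_iff_integrableOn_Ioc_of_le hy.1.le).2 (hp.mono_set (Ioc_subset_Ioc_right hy.2))
    rw [← intervalIntegral.integral_of_le hab]
    exact (intervalIntegral.integral_interval_sub_left h1 h2).symm
  have hqprim : ContinuousOn (fun x => ∫ t in a..x, q t) (Icc a b) := by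
    have : IntegrableOn q (uIcc a b) := by
      rw [uIcc_of_le hab, integrableOn_Icc_iff_integrableOn_Ioc]
      exact hq
    simpa [uIcc_of_le hab] using intervalIntegral.continuousOn_primitive_interval this
  have hIpq : IntegrableOn (fun y => (∫ t in a..y, p t) * q y) (Ioc a b) := by
    have : IntegrableOn p (uIcc a b) := by
      rw [uIcc_of_le hab, integrableOn_Icc_iff_integrableOn_Ioc]
      exact hp
    exact my_integrable_mul_of_continuousOn' hq
      (by simpa [uIcc_of_le hab] using intervalIntegral.continuousOn_primitive_interval this)
  have key : ∫ x in Ioc a b, p x * (∫ t in a..x, q t)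
      = (∫ x in Ioc a b, p x) * (∫ x in Ioc a b, q x)
        - ∫ y in Ioc a b, (∫ t in a..y, p t) * q y := by
    calc ∫ x in Ioc a b, p x * (∫ t in a..x, q t)
        = ∫ x, (∫ y, k (x, y) ∂μ) ∂μ :=
          (setIntegral_congr_fun measurableSet_Ioc h2).symm
      _ = ∫ y, (∫ x, k (x, y) ∂μ) ∂μ := integral_integral_swap hint
      _ = ∫ y in Ioc a b, ((∫ x in Ioc a b, p x) - ∫ t in a..y, p t) * q y :=
          setIntegral_congr_fun measurableSet_Ioc h3
      _ = ∫ y in Ioc a b, ((∫ x in Ioc a b, p x) * q y - (∫ t in a..y, p t) * q y) := by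
          simp_rw [sub_mul]
      _ = (∫ y in Ioc a b, (∫ x in Ioc a b, p x) * q y)
            - ∫ y in Ioc a b, (∫ t in a..y, p t) * q y :=
          integral_sub (hq.const_mul _) hIpq
      _ = (∫ x in Ioc a b, p x) * (∫ x in Ioc a b, q x)
            - ∫ y in Ioc a b, (∫ t in a..y, p t) * q y := by
          rw [MeasureTheory.integral_const_mul]
  rw [key]; ring

lemma my_parts {a b : ℝ} (hab : a ≤ b) {p q : ℝ → ℂ}
    (hp : IntegrableOn p (Ioc a b)) (hq : IntegrableOn q (Ioc a b))
    {U V : ℝ → ℂ}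
    (hU : ∀ x ∈ Set.Icc a b, U x = U a + ∫ t in a..x, p t)
    (hV : ∀ x ∈ Set.Icc a b, V x = V a + ∫ t in a..x, q t) :
    ∫ x in Ioc a b, (p x * V x + U x * q x) = U b * V b - U a * V a := by
  have hpI : IntegrableOn p (uIcc a b) := by
    rw [uIcc_of_le hab, integrableOn_Icc_iff_integrableOn_Ioc]; exact hp
  have hqI : IntegrableOn q (uIcc a b) := by
    rw [uIcc_of_le hab, integrableOn_Icc_iff_integrableOn_Ioc]; exact hq
  have hpprim : ContinuousOn (fun x => ∫ t in a..x, p t) (Icc a b) := by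
    simpa [uIcc_of_le hab] using intervalIntegral.continuousOn_primitive_interval hpI
  have hqprim : ContinuousOn (fun x => ∫ t in a..x, q t) (Icc a b) := by
    simpa [uIcc_of_le hab] using intervalIntegral.continuousOn_primitive_interval hqI
  have step1 : ∫ x in Ioc a b, (p x * V x + U x * q x)
      = ∫ x in Ioc a b, (p x * (V a + ∫ t in a..x, q t)
          + (U a + ∫ t in a..x, p t) * q x) := by
    apply setIntegral_congr_fun measurableSet_Ioc
    intro x hx
    simp only [hU x (Ioc_subset_Icc_self hx), hV x (Ioc_subset_Icc_self hx)]
  have i1 : IntegrableOn (fun x => p x * V a) (Ioc a b) := hp.mul_const _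
  have i2 : IntegrableOn (fun x => p x * ∫ t in a..x, q t) (Ioc a b) :=
    my_integrable_mul_of_continuousOn hp hqprim
  have i3 : IntegrableOn (fun x => U a * q x) (Ioc a b) := hq.const_mul _
  have i4 : IntegrableOn (fun x => (∫ t in a..x, p t) * q x) (Ioc a b) :=
    my_integrable_mul_of_continuousOn' hq hpprim
  have step2 : ∫ x in Ioc a b, (p x * (V a + ∫ t in a..x, q t)
        + (U a + ∫ t in a..x, p t) * q x)
      = (∫ x in Ioc a b, p x * V a) + (∫ x in Ioc a b, p x * ∫ t in a..x, q t)
        + ((∫ x in Ioc a b, U a * q x) + ∫ x in Ioc a b, (∫ t in a..x, p t) * q x) := by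
    rw [show (fun x => p x * (V a + ∫ t in a..x, q t) + (U a + ∫ t in a..x, p t) * q x)
        = fun x => (p x * V a + p x * ∫ t in a..x, q t)
            + (U a * q x + (∫ t in a..x, p t) * q x) from funext fun x => by ring]
    have i12 : IntegrableOn (fun x => p x * V a + p x * ∫ t in a..x, q t) (Ioc a b) := i1.add i2
    have i34 : IntegrableOn (fun x => U a * q x + (∫ t in a..x, p t) * q x) (Ioc a b) := i3.add i4
    rw [integral_add i12 i34, integral_add i1 i2, integral_add i3 i4]
  rw [step1, step2, hU b ⟨hab, le_refl b⟩, hV b ⟨hab, le_refl b⟩,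
    MeasureTheory.integral_mul_const, MeasureTheory.integral_const_mul]
  simp only [intervalIntegral.integral_of_le hab]
  have := my_parts_aux hab hp hq
  linear_combination this

lemma my_integrable_conj {α : Type*} {m : MeasurableSpace α} {μ : Measure α} {h : α → ℂ}
    (hh : Integrable h μ) : Integrable (fun x => (starRingEnd ℂ) (h x)) μ := by
  apply Integrable.mono' hh.norm (RCLike.continuous_conj.comp_aestronglyMeasurable hh.1)
  filter_upwards with x
  simp

lemma my_integrable_re {α : Type*} {m : MeasurableSpace α} {μ : Measure α} {h : α → ℂ}
    (hh : Integrable h μ) : Integrable (fun x => (h x).re) μ := by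
  apply Integrable.mono' hh.norm (Complex.continuous_re.comp_aestronglyMeasurable hh.1)
  filter_upwards with x
  simpa using Complex.abs_re_le_norm (h x)

lemma my_integral_re {α : Type*} {m : MeasurableSpace α} {μ : Measure α} {h : α → ℂ}
    (hh : Integrable h μ) : ∫ x, (h x).re ∂μ = (∫ x, h x ∂μ).re := integral_re hh

lemma my_norm_sq_sub (y c : ℂ) (r : ℝ) :
    ‖y - (r : ℂ) * c‖ ^ 2 = ‖y‖ ^ 2 - 2 * r * (y * (starRingEnd ℂ) c).re + r ^ 2 * ‖c‖ ^ 2 := by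
  simp only [Complex.sq_norm, Complex.normSq_apply, Complex.sub_re,
    Complex.sub_im, Complex.mul_re, Complex.mul_im, Complex.ofReal_re, Complex.ofReal_im,
    Complex.conj_re, Complex.conj_im]
  ring


/-- Uncertainty principle on the circle with `sin θ` as position operator: for
`f ∈ L²(-π,π)` absolutely continuous, periodic, with `f' ∈ L²` and `f ≠ 0`,
`‖(sin θ - a) f‖₂ ‖(d/dθ - b) f‖₂ ≥ (1/2) |⟨(cos θ) f, f⟩|`. -/
theorem sine_uncertainty_circle
    (f f' : ℝ → ℂ)
    (hAC : ∀ θ ∈ Set.Icc (-π) π, f θ = f (-π) + ∫ t in (-π)..θ, f' t)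
    (hf' : MemLp f' 2 (volume.restrict (Set.Ioc (-π) π)))
    (hper : f (-π) = f π)
    (hne : ∃ θ ∈ Set.Icc (-π) π, f θ ≠ 0)
    (a b : ℂ) :
    (∫ θ in (-π)..π, ‖(Real.sin θ : ℂ) * f θ - a * f θ‖ ^ 2) ^ ((1 : ℝ) / 2)
      * (∫ θ in (-π)..π, ‖f' θ - b * f θ‖ ^ 2) ^ ((1 : ℝ) / 2)
    ≥ (1 / 2) * ‖∫ θ in (-π)..π,
        (Real.cos θ : ℂ) * f θ * (starRingEnd ℂ) (f θ)‖ := by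
  have hpi : (-π : ℝ) ≤ π := by linarith [Real.pi_pos]
  set I : Set ℝ := Set.Ioc (-π) π with hI
  haveI hfin : IsFiniteMeasure (volume.restrict I) := by
    constructor
    rw [Measure.restrict_apply_univ, hI, Real.volume_Ioc]
    exact ENNReal.ofReal_lt_top
  have hf'int : IntegrableOn f' I := hf'.integrable one_le_two
  set F : ℝ → ℂ := fun x => f (-π) + ∫ t in (-π)..x, f' t with hFdef
  have hFa : F (-π) = f (-π) := by simp [hFdef]
  have hFf : ∀ θ ∈ Set.Icc (-π) π, f θ = F θ := hAC
  have hfI : IntegrableOn f' (uIcc (-π) π) := by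
    rw [uIcc_of_le hpi, integrableOn_Icc_iff_integrableOn_Ioc]; exact hf'int
  have hFc : ContinuousOn F (Set.Icc (-π) π) := by
    apply continuousOn_const.add
    simpa [uIcc_of_le hpi] using intervalIntegral.continuousOn_primitive_interval hfI
  have hFU : ∀ x ∈ Set.Icc (-π) π, F x = F (-π) + ∫ t in (-π)..x, f' t := by
    intro x _; rw [hFa]
  have hconjint : IntegrableOn (fun t => (starRingEnd ℂ) (f' t)) I := my_integrable_conj hf'int
  have hFconjU : ∀ x ∈ Set.Icc (-π) π, (starRingEnd ℂ) (F x)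
      = (starRingEnd ℂ) (F (-π)) + ∫ t in (-π)..x, (starRingEnd ℂ) (f' t) := by
    intro x hx
    rw [hFU x hx, map_add]
    congr 1
    rw [intervalIntegral.integral_of_le hx.1, intervalIntegral.integral_of_le hx.1,
      integral_conj]
  have hπ : π ∈ Set.Icc (-π) π := ⟨hpi, le_refl π⟩
  have hFπ : F π = f (-π) := by rw [← hFf π hπ, hper]
  have idA : ∫ x in I, (f' x * (starRingEnd ℂ) (F x) + F x * (starRingEnd ℂ) (f' x)) = 0 := by
    rw [my_parts hpi hf'int hconjint hFU hFconjU, hFπ, hFa]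
    ring
  -- integrability of various products
  have hsinc : Continuous (fun x : ℝ => (Real.sin x : ℂ)) :=
    Complex.continuous_ofReal.comp Real.continuous_sin
  have hcosc : Continuous (fun x : ℝ => (Real.cos x : ℂ)) :=
    Complex.continuous_ofReal.comp Real.continuous_cos
  have hFconjc : ContinuousOn (fun x => (starRingEnd ℂ) (F x)) (Set.Icc (-π) π) :=
    RCLike.continuous_conj.comp_continuousOn hFc
  have i_M : IntegrableOn (fun x => (starRingEnd ℂ) (F x) * f' x) I :=
    my_integrable_mul_of_continuousOn' hf'int hFconjc
  have i_z : IntegrableOn (fun x => (Real.sin x : ℂ) * ((starRingEnd ℂ) (F x) * f' x)) I := by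
    have := my_integrable_mul_of_continuousOn' hf'int (hsinc.continuousOn.mul hFconjc)
    simpa [mul_assoc] using this
  have i_N : IntegrableOn (fun x => (starRingEnd ℂ) (F x) * F x) I :=
    ((hFconjc.mul hFc).integrableOn_compact isCompact_Icc).mono_set Ioc_subset_Icc_self
  have i_S : IntegrableOn (fun x => (Real.sin x : ℂ) * ((starRingEnd ℂ) (F x) * F x)) I :=
    ((hsinc.continuousOn.mul (hFconjc.mul hFc)).integrableOn_compact
      isCompact_Icc).mono_set Ioc_subset_Icc_self
  set M : ℂ := ∫ x in I, (starRingEnd ℂ) (F x) * f' x with hM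
  set z : ℂ := ∫ x in I, (Real.sin x : ℂ) * ((starRingEnd ℂ) (F x) * f' x) with hz
  set S : ℂ := ∫ x in I, (Real.sin x : ℂ) * ((starRingEnd ℂ) (F x) * F x) with hS
  set N : ℂ := ∫ x in I, (starRingEnd ℂ) (F x) * F x with hN
  -- M has zero real part
  have hM0 : M.re = 0 := by
    have h1 : M + (starRingEnd ℂ) M = 0 := by
      rw [hM, ← integral_conj, ← integral_add i_M (my_integrable_conj i_M)]
      rw [← idA]
      apply setIntegral_congr_fun measurableSet_Ioc
      intro x _
      simp only [map_mul, Complex.conj_conj]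
      ring
    have h2 : (2 * M.re : ℝ) = (0 : ℂ) := by rw [← Complex.add_conj, h1]
    have h3 : (2 * M.re : ℝ) = 0 := by exact_mod_cast h2
    linarith
  -- S and N are real
  have hS0 : S.im = 0 := by
    have h1 : (starRingEnd ℂ) S = S := by
      rw [hS, ← integral_conj]
      apply setIntegral_congr_fun measurableSet_Ioc
      intro x _
      simp only [map_mul, Complex.conj_conj, Complex.conj_ofReal]
      ring
    have := Complex.conj_eq_iff_im.mp h1
    exact this
  have hN0 : N.im = 0 := by
    have h1 : (starRingEnd ℂ) N = N := by
      rw [hN, ← integral_conj]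
      apply setIntegral_congr_fun measurableSet_Ioc
      intro x _
      simp only [map_mul, Complex.conj_conj]
      ring
    exact Complex.conj_eq_iff_im.mp h1
  -- the commutator identity
  set w : ℝ → ℂ := fun x => f' x * (starRingEnd ℂ) (F x) + F x * (starRingEnd ℂ) (f' x) with hw
  have hwint : IntegrableOn w I := by
    apply Integrable.add
    · exact my_integrable_mul_of_continuousOn hf'int hFconjc
    · exact my_integrable_mul_of_continuousOn' hconjint hFc
  set G : ℝ → ℂ := fun x => F x * (starRingEnd ℂ) (F x) with hG
  have hGU : ∀ c ∈ Set.Icc (-π) π, G c = G (-π) + ∫ t in (-π)..c, w t := by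
    intro c hc
    have h1 : IntegrableOn f' (Ioc (-π) c) := hf'int.mono_set (Ioc_subset_Ioc_right hc.2)
    have h2 : IntegrableOn (fun t => (starRingEnd ℂ) (f' t)) (Ioc (-π) c) :=
      hconjint.mono_set (Ioc_subset_Ioc_right hc.2)
    have h3 : ∀ x ∈ Set.Icc (-π) c, F x = F (-π) + ∫ t in (-π)..x, f' t :=
      fun x hx => hFU x ⟨hx.1, hx.2.trans hc.2⟩
    have h4 : ∀ x ∈ Set.Icc (-π) c, (starRingEnd ℂ) (F x)
        = (starRingEnd ℂ) (F (-π)) + ∫ t in (-π)..x, (starRingEnd ℂ) (f' t) :=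
      fun x hx => hFconjU x ⟨hx.1, hx.2.trans hc.2⟩
    have key := my_parts hc.1 h1 h2 h3 h4
    simp only [hG, hw]
    rw [intervalIntegral.integral_of_le hc.1, key]
    ring
  have hcosint : IntegrableOn (fun θ => (Real.cos θ : ℂ)) I := hcosc.integrableOn_Ioc
  have hsinU : ∀ x ∈ Set.Icc (-π) π, ((Real.sin x : ℂ))
      = ((Real.sin (-π) : ℂ)) + ∫ t in (-π)..x, (Real.cos t : ℂ) := by
    intro x _
    rw [intervalIntegral.integral_ofReal, integral_cos]
    push_cast
    ring
  have idB : ∫ x in I, ((Real.cos x : ℂ) * G x + (Real.sin x : ℂ) * w x) = 0 := by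
    rw [my_parts hpi hcosint hwint hsinU hGU]
    simp [Real.sin_pi, Real.sin_neg]
  have i_cosG : IntegrableOn (fun x => (Real.cos x : ℂ) * G x) I :=
    ((hcosc.continuousOn.mul (hFc.mul hFconjc)).integrableOn_compact
      isCompact_Icc).mono_set Ioc_subset_Icc_self
  have i_sinw : IntegrableOn (fun x => (Real.sin x : ℂ) * w x) I :=
    my_integrable_mul_of_continuousOn' hwint hsinc.continuousOn
  have hsinw_eq : ∫ x in I, (Real.sin x : ℂ) * w x = z + (starRingEnd ℂ) z := by
    rw [hz, ← integral_conj, ← integral_add i_z (my_integrable_conj i_z)]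
    apply setIntegral_congr_fun measurableSet_Ioc
    intro x _
    simp only [hw, map_mul, Complex.conj_conj, Complex.conj_ofReal]
    ring
  have hCeq : ∫ x in I, (Real.cos x : ℂ) * G x = -(z + (starRingEnd ℂ) z) := by
    have := integral_add i_cosG i_sinw
    rw [idB] at this
    rw [← hsinw_eq]
    linear_combination -this
  -- shifted operators using real part of a and imaginary part of b
  set u0 : ℝ → ℂ := fun x => ((Real.sin x : ℂ) - (a.re : ℂ)) * F x with hu0
  set v0 : ℝ → ℂ := fun x => f' x - (b.im : ℂ) * Complex.I * F x with hv0
  have hu0c : ContinuousOn u0 (Set.Icc (-π) π) :=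
    (hsinc.continuousOn.sub continuousOn_const).mul hFc
  have hv0int : IntegrableOn v0 I := by
    apply Integrable.sub hf'int
    exact ((continuousOn_const.mul hFc).integrableOn_compact
      isCompact_Icc).mono_set Ioc_subset_Icc_self
  set Z : ℂ := ∫ x in I, (starRingEnd ℂ) (u0 x) * v0 x with hZdef
  have hZ : Z = z - (a.re : ℂ) * M - ((b.im : ℂ) * Complex.I) * S
      + (a.re : ℂ) * ((b.im : ℂ) * Complex.I) * N := by
    rw [hZdef]
    have e : (fun x => (starRingEnd ℂ) (u0 x) * v0 x) = fun x =>
        ((Real.sin x : ℂ) * ((starRingEnd ℂ) (F x) * f' x)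
          - (a.re : ℂ) * ((starRingEnd ℂ) (F x) * f' x))
        - (((b.im : ℂ) * Complex.I) * ((Real.sin x : ℂ) * ((starRingEnd ℂ) (F x) * F x))
          - ((a.re : ℂ) * ((b.im : ℂ) * Complex.I)) * ((starRingEnd ℂ) (F x) * F x)) := by
      funext x
      simp only [hu0, hv0, map_mul, map_sub, Complex.conj_ofReal]
      ring
    rw [e]
    have i1 : IntegrableOn (fun x => (Real.sin x : ℂ) * ((starRingEnd ℂ) (F x) * f' x)
        - (a.re : ℂ) * ((starRingEnd ℂ) (F x) * f' x)) I := i_z.sub (i_M.const_mul _)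
    have i2 : IntegrableOn (fun x =>
        ((b.im : ℂ) * Complex.I) * ((Real.sin x : ℂ) * ((starRingEnd ℂ) (F x) * F x))
        - ((a.re : ℂ) * ((b.im : ℂ) * Complex.I)) * ((starRingEnd ℂ) (F x) * F x)) I :=
      (i_S.const_mul _).sub (i_N.const_mul _)
    rw [integral_sub i1 i2, integral_sub i_z (i_M.const_mul _),
      integral_sub (i_S.const_mul _) (i_N.const_mul _),
      MeasureTheory.integral_const_mul, MeasureTheory.integral_const_mul,
      MeasureTheory.integral_const_mul, hz, hM, hS, hN]
    ring
  have hZre : Z.re = z.re := by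
    rw [hZ]
    simp [Complex.add_re, Complex.sub_re, Complex.mul_re, Complex.mul_im,
      Complex.I_re, Complex.I_im, Complex.ofReal_re, Complex.ofReal_im, hM0, hS0, hN0]
  have hCnorm : ‖∫ x in I, (Real.cos x : ℂ) * G x‖ ≤ 2 * ‖Z‖ := by
    rw [hCeq, Complex.add_conj, norm_neg, Complex.norm_real, Real.norm_eq_abs,
      abs_mul, abs_two]
    have h1 : |z.re| ≤ ‖Z‖ := by
      rw [← hZre]
      exact Complex.abs_re_le_norm Z
    linarith
  -- Hölder / Cauchy-Schwarz
  have hpq : (2:ℝ).HolderConjugate 2 := ⟨by norm_num, by norm_num, by norm_num⟩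
  have hu0mem : MemLp u0 2 (volume.restrict I) := by
    obtain ⟨Cu, hCu⟩ := isCompact_Icc.exists_bound_of_continuousOn hu0c
    apply MemLp.of_bound ((hu0c.mono Ioc_subset_Icc_self).aestronglyMeasurable
      measurableSet_Ioc) Cu
    filter_upwards [ae_restrict_mem measurableSet_Ioc] with x hx
    exact hCu x (Ioc_subset_Icc_self hx)
  have hbFc : ContinuousOn (fun x => (b.im : ℂ) * Complex.I * F x) (Set.Icc (-π) π) :=
    continuousOn_const.mul hFc
  have hbFmem : MemLp (fun x => (b.im : ℂ) * Complex.I * F x) 2 (volume.restrict I) := by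
    obtain ⟨Cv, hCv⟩ := isCompact_Icc.exists_bound_of_continuousOn hbFc
    apply MemLp.of_bound ((hbFc.mono Ioc_subset_Icc_self).aestronglyMeasurable
      measurableSet_Ioc) Cv
    filter_upwards [ae_restrict_mem measurableSet_Ioc] with x hx
    exact hCv x (Ioc_subset_Icc_self hx)
  have hv0mem : MemLp v0 2 (volume.restrict I) := hf'.sub hbFmem
  have h2e : ENNReal.ofReal (2:ℝ) = (2 : ENNReal) := by norm_num
  have hHolder := integral_mul_norm_le_Lp_mul_Lq (μ := volume.restrict I) hpq
    (by rw [h2e]; exact hu0mem) (by rw [h2e]; exact hv0mem)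
  have hrpow : ∀ g : ℝ → ℂ, (∫ x in I, ‖g x‖ ^ (2:ℝ)) = ∫ x in I, ‖g x‖ ^ 2 := by
    intro g
    apply integral_congr_ae
    filter_upwards with x
    rw [show (2:ℝ) = ((2:ℕ):ℝ) by norm_num, Real.rpow_natCast]
  rw [hrpow u0, hrpow v0] at hHolder
  have hZle : ‖Z‖ ≤ (∫ x in I, ‖u0 x‖ ^ 2) ^ ((1:ℝ)/2) * (∫ x in I, ‖v0 x‖ ^ 2) ^ ((1:ℝ)/2) := by
    calc ‖Z‖ ≤ ∫ x in I, ‖(starRingEnd ℂ) (u0 x) * v0 x‖ := norm_integral_le_integral_norm _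
      _ = ∫ x in I, ‖u0 x‖ * ‖v0 x‖ := by
          apply integral_congr_ae
          filter_upwards with x
          simp
      _ ≤ _ := hHolder
  -- rewrite the statement's integrals in terms of F
  have hXcongr : (∫ θ in (-π)..π, ‖(Real.sin θ : ℂ) * f θ - a * f θ‖ ^ 2)
      = ∫ x in I, ‖(Real.sin x : ℂ) * F x - a * F x‖ ^ 2 := by
    rw [intervalIntegral.integral_of_le hpi]
    apply setIntegral_congr_fun measurableSet_Ioc
    intro x hx
    simp only [hFf x (Ioc_subset_Icc_self hx)]
  have hYcongr : (∫ θ in (-π)..π, ‖f' θ - b * f θ‖ ^ 2)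
      = ∫ x in I, ‖f' x - b * F x‖ ^ 2 := by
    rw [intervalIntegral.integral_of_le hpi]
    apply setIntegral_congr_fun measurableSet_Ioc
    intro x hx
    simp only [hFf x (Ioc_subset_Icc_self hx)]
  have hCcongr : (∫ θ in (-π)..π, (Real.cos θ : ℂ) * f θ * (starRingEnd ℂ) (f θ))
      = ∫ x in I, (Real.cos x : ℂ) * G x := by
    rw [intervalIntegral.integral_of_le hpi]
    apply setIntegral_congr_fun measurableSet_Ioc
    intro x hx
    simp only [hFf x (Ioc_subset_Icc_self hx)]
    simp only [hG]
    ring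
  -- monotonicity in a
  have huc : ContinuousOn (fun x => (Real.sin x : ℂ) * F x - a * F x) (Set.Icc (-π) π) :=
    (hsinc.continuousOn.mul hFc).sub (continuousOn_const.mul hFc)
  have iXu : IntegrableOn (fun x => ‖(Real.sin x : ℂ) * F x - a * F x‖ ^ 2) I :=
    ((huc.norm.pow 2).integrableOn_compact isCompact_Icc).mono_set Ioc_subset_Icc_self
  have iXu0 : IntegrableOn (fun x => ‖u0 x‖ ^ 2) I :=
    ((hu0c.norm.pow 2).integrableOn_compact isCompact_Icc).mono_set Ioc_subset_Icc_self
  have hXle : (∫ x in I, ‖u0 x‖ ^ 2) ≤ ∫ x in I, ‖(Real.sin x : ℂ) * F x - a * F x‖ ^ 2 := by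
    apply setIntegral_mono_on iXu0 iXu measurableSet_Ioc
    intro x _
    have h1 : ‖u0 x‖ ≤ ‖(Real.sin x : ℂ) * F x - a * F x‖ := by
      have e : (Real.sin x : ℂ) * F x - a * F x = ((Real.sin x : ℂ) - a) * F x := by ring
      rw [e]
      simp only [hu0]
      rw [norm_mul, norm_mul]
      gcongr
      have e2 : ‖(Real.sin x : ℂ) - (a.re : ℂ)‖ = |Real.sin x - a.re| := by
        rw [← Complex.ofReal_sub, Complex.norm_real, Real.norm_eq_abs]
      have e3 : Real.sin x - a.re = ((Real.sin x : ℂ) - a).re := by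
        simp only [Complex.sub_re, Complex.ofReal_re]
      rw [e2, e3]
      exact Complex.abs_re_le_norm _
    exact pow_le_pow_left₀ (norm_nonneg _) h1 2
  -- monotonicity in b
  have hbdecomp : ∀ x : ℝ, f' x - b * F x = v0 x - (b.re : ℂ) * F x := by
    intro x
    simp only [hv0]
    linear_combination (F x) * (Complex.re_add_im b)
  have hpt : ∀ x : ℝ, ‖f' x - b * F x‖ ^ 2
      = ‖v0 x‖ ^ 2 - 2 * b.re * ((v0 x * (starRingEnd ℂ) (F x)).re)
        + b.re ^ 2 * ‖F x‖ ^ 2 := by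
    intro x
    rw [hbdecomp x]
    exact my_norm_sq_sub _ _ _
  have hv0conjF : IntegrableOn (fun x => v0 x * (starRingEnd ℂ) (F x)) I :=
    my_integrable_mul_of_continuousOn hv0int hFconjc
  have i_cross : IntegrableOn (fun x => (v0 x * (starRingEnd ℂ) (F x)).re) I :=
    my_integrable_re hv0conjF
  have iYv0 : IntegrableOn (fun x => ‖v0 x‖ ^ 2) I := by
    have h := hv0mem.integrable_norm_rpow (by norm_num) (by norm_num)
    refine h.congr (Filter.Eventually.of_forall fun x => ?_)
    show ‖v0 x‖ ^ ((2:ENNReal)).toReal = ‖v0 x‖ ^ (2:ℕ)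
    rw [show ((2:ENNReal)).toReal = ((2:ℕ):ℝ) by simp, Real.rpow_natCast]
  have iYF : IntegrableOn (fun x => ‖F x‖ ^ 2) I :=
    ((hFc.norm.pow 2).integrableOn_compact isCompact_Icc).mono_set Ioc_subset_Icc_self
  have hYeq : (∫ x in I, ‖f' x - b * F x‖ ^ 2)
      = (∫ x in I, ‖v0 x‖ ^ 2)
        - 2 * b.re * (∫ x in I, (v0 x * (starRingEnd ℂ) (F x)).re)
        + b.re ^ 2 * ∫ x in I, ‖F x‖ ^ 2 := by
    calc ∫ x in I, ‖f' x - b * F x‖ ^ 2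
        = ∫ x in I, (‖v0 x‖ ^ 2 - 2 * b.re * ((v0 x * (starRingEnd ℂ) (F x)).re)
            + b.re ^ 2 * ‖F x‖ ^ 2) :=
          setIntegral_congr_fun measurableSet_Ioc (fun x _ => hpt x)
      _ = _ := by
          have j1 : IntegrableOn (fun x => ‖v0 x‖ ^ 2
              - 2 * b.re * ((v0 x * (starRingEnd ℂ) (F x)).re)) I :=
            iYv0.sub (i_cross.const_mul (2 * b.re))
          have j2 : IntegrableOn (fun x => b.re ^ 2 * ‖F x‖ ^ 2) I := iYF.const_mul _
          rw [integral_add j1 j2, integral_sub iYv0 (i_cross.const_mul _),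
            MeasureTheory.integral_const_mul, MeasureTheory.integral_const_mul]
  have hcross0 : (∫ x in I, (v0 x * (starRingEnd ℂ) (F x)).re) = 0 := by
    rw [my_integral_re hv0conjF]
    have e2 : (fun x => v0 x * (starRingEnd ℂ) (F x)) = fun x =>
        ((starRingEnd ℂ) (F x) * f' x)
          - ((b.im : ℂ) * Complex.I) * ((starRingEnd ℂ) (F x) * F x) := by
      funext x
      simp only [hv0]
      ring
    rw [e2, integral_sub i_M (i_N.const_mul _), MeasureTheory.integral_const_mul, ← hM, ← hN]
    simp [Complex.sub_re, Complex.mul_re, Complex.mul_im, Complex.I_re, Complex.I_im,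
      Complex.ofReal_re, Complex.ofReal_im, hM0, hN0]
  have hFsq0 : 0 ≤ ∫ x in I, ‖F x‖ ^ 2 := integral_nonneg fun x => by positivity
  have hYle : (∫ x in I, ‖v0 x‖ ^ 2) ≤ ∫ x in I, ‖f' x - b * F x‖ ^ 2 := by
    rw [hYeq, hcross0]
    nlinarith [mul_nonneg (sq_nonneg b.re) hFsq0]
  -- final assembly
  have hX0 : 0 ≤ ∫ x in I, ‖u0 x‖ ^ 2 := integral_nonneg fun x => by positivity
  have hY0 : 0 ≤ ∫ x in I, ‖v0 x‖ ^ 2 := integral_nonneg fun x => by positivity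
  rw [ge_iff_le, hXcongr, hYcongr, hCcongr]
  calc (1/2 : ℝ) * ‖∫ x in I, (Real.cos x : ℂ) * G x‖
      ≤ (1/2 : ℝ) * (2 * ‖Z‖) := by
        have := hCnorm
        linarith
    _ = ‖Z‖ := by ring
    _ ≤ (∫ x in I, ‖u0 x‖ ^ 2) ^ ((1:ℝ)/2) * (∫ x in I, ‖v0 x‖ ^ 2) ^ ((1:ℝ)/2) := hZle
    _ ≤ (∫ x in I, ‖(Real.sin x : ℂ) * F x - a * F x‖ ^ 2) ^ ((1:ℝ)/2)
        * (∫ x in I, ‖f' x - b * F x‖ ^ 2) ^ ((1:ℝ)/2) := by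
        have h1 := Real.rpow_le_rpow hX0 hXle (by norm_num : (0:ℝ) ≤ 1/2)
        have h2 := Real.rpow_le_rpow hY0 hYle (by norm_num : (0:ℝ) ≤ 1/2)
        exact mul_le_mul h1 h2 (Real.rpow_nonneg hY0 _)
          (Real.rpow_nonneg (le_trans hX0 hXle) _)
end

section
/- For every f in the Schwartz space (or f ∈ L²(ℝ) with f' ∈ L² and xf ∈ L²), f ≠ 0, and all a, b ∈ ℂ: ‖(d/dx - a)f‖₂ · ‖(x - b)f‖₂ ≥ (1/2)‖f‖₂². -/
open MeasureTheory Set Filter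

/-- If a function and its derivative are both integrable on ℝ, the integral of
the derivative is zero. -/
lemma integral_deriv_eq_zero_aux {h h' : ℝ → ℝ}
    (hd : ∀ x, HasDerivAt h (h' x) x)
    (hint : Integrable h (volume : Measure ℝ))
    (hint' : Integrable h' (volume : Measure ℝ)) :
    ∫ x, h' x = 0 := by
  have htop : Tendsto h atTop (nhds 0) :=
    tendsto_zero_of_hasDerivAt_of_integrableOn_Ioi (a := 0) (fun x _ => hd x)
      hint'.integrableOn hint.integrableOn
  have hbot : Tendsto h atBot (nhds 0) :=
    tendsto_zero_of_hasDerivAt_of_integrableOn_Iic (a := 0) (fun x _ => hd x)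
      hint'.integrableOn hint.integrableOn
  have h1 : ∫ x in Ioi (0:ℝ), h' x = 0 - h 0 :=
    integral_Ioi_of_hasDerivAt_of_tendsto' (fun x _ => hd x) hint'.integrableOn htop
  have h2 : ∫ x in Iic (0:ℝ), h' x = h 0 - 0 :=
    integral_Iic_of_hasDerivAt_of_tendsto' (fun x _ => hd x) hint'.integrableOn hbot
  rw [← intervalIntegral.integral_Iic_add_Ioi (b := (0:ℝ)) hint'.integrableOn
    hint'.integrableOn, h1, h2]
  ring

/-- product of norms of two L² functions is integrable -/
lemma integrable_norm_mul_aux {u v : ℝ → ℂ}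
    (hu : MemLp u 2 (volume : Measure ℝ)) (hv : MemLp v 2 (volume : Measure ℝ)) :
    Integrable (fun x => ‖u x‖ * ‖v x‖) (volume : Measure ℝ) := by
  have hui : Integrable (fun x => ‖u x‖ ^ 2) volume :=
    (memLp_two_iff_integrable_sq_norm hu.1).mp hu
  have hvi : Integrable (fun x => ‖v x‖ ^ 2) volume :=
    (memLp_two_iff_integrable_sq_norm hv.1).mp hv
  refine Integrable.mono' ((hui.add hvi).div_const 2)
    (hu.1.norm.mul hv.1.norm) (Filter.Eventually.of_forall fun x => ?_)
  rw [Real.norm_of_nonneg (by positivity)]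
  have := two_mul_le_add_sq ‖u x‖ ‖v x‖
  simp only [Pi.add_apply]
  nlinarith [this]

lemma norm_sq_c (z : ℂ) : ‖z‖ ^ 2 = z.re ^ 2 + z.im ^ 2 := by
  rw [Complex.sq_norm, Complex.normSq_apply]; ring

lemma dot_le_norm_mul_norm (z w : ℂ) :
    |z.re * w.re + z.im * w.im| ≤ ‖z‖ * ‖w‖ := by
  have h1 : z.re * w.re + z.im * w.im = ((starRingEnd ℂ) z * w).re := by
    simp [Complex.mul_re]
  rw [h1]
  calc |((starRingEnd ℂ) z * w).re| ≤ ‖(starRingEnd ℂ) z * w‖ := Complex.abs_re_le_norm _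
    _ = ‖z‖ * ‖w‖ := by rw [norm_mul, RCLike.norm_conj]

/-- The Heisenberg uncertainty principle on the line, with arbitrary complex
centers: for `f ∈ L²(ℝ)` differentiable with `f' ∈ L²` and `x f ∈ L²`, `f ≠ 0`,
`‖(d/dx - a) f‖₂ ‖(x - b) f‖₂ ≥ (1/2) ‖f‖₂²`. -/
theorem heisenberg_uncertainty
    (f f' : ℝ → ℂ)
    (hderiv : ∀ x : ℝ, HasDerivAt f (f' x) x)
    (hf : MemLp f 2 (volume : Measure ℝ))
    (hf' : MemLp f' 2 (volume : Measure ℝ))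
    (hxf : MemLp (fun x : ℝ => (x : ℂ) * f x) 2 (volume : Measure ℝ))
    (hne : f ≠ 0) (a b : ℂ) :
    (∫ x : ℝ, ‖f' x - a * f x‖ ^ 2) ^ ((1 : ℝ) / 2)
      * (∫ x : ℝ, ‖(x : ℂ) * f x - b * f x‖ ^ 2) ^ ((1 : ℝ) / 2)
    ≥ (1 / 2) * ∫ x : ℝ, ‖f x‖ ^ 2 := by
  set β : ℝ := b.re with hβ
  set u : ℝ → ℂ := fun x => f' x - a * f x with hu_def
  set v : ℝ → ℂ := fun x => (x : ℂ) * f x - b * f x with hv_def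
  set u₀ : ℝ → ℂ := fun x => f' x - (a.im : ℂ) * Complex.I * f x with hu0_def
  set v₀ : ℝ → ℂ := fun x => (x : ℂ) * f x - (β : ℂ) * f x with hv0_def
  have hu : MemLp u 2 volume := hf'.sub (hf.const_mul a)
  have hv : MemLp v 2 volume := hxf.sub (hf.const_mul b)
  have hu0 : MemLp u₀ 2 volume := hf'.sub (hf.const_mul ((a.im : ℂ) * Complex.I))
  have hv0 : MemLp v₀ 2 volume := hxf.sub (hf.const_mul (β : ℂ))
  have hfc : Continuous f := continuous_iff_continuousAt.2 fun x => (hderiv x).continuousAt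
  set g : ℝ → ℝ := fun x => ‖f x‖ ^ 2 with hg_def
  set gd : ℝ → ℝ := fun x => 2 * ((f x).re * (f' x).re + (f x).im * (f' x).im) with hgd_def
  have hgc : Continuous g := (hfc.norm.pow 2)
  -- derivative of g
  have hg_deriv : ∀ x, HasDerivAt g (gd x) x := by
    intro x
    have hre : HasDerivAt (fun y => (f y).re) ((f' x).re) x :=
      Complex.reCLM.hasFDerivAt.comp_hasDerivAt x (hderiv x)
    have him : HasDerivAt (fun y => (f y).im) ((f' x).im) x :=
      Complex.imCLM.hasFDerivAt.comp_hasDerivAt x (hderiv x)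
    have h1 : HasDerivAt (fun y => (f y).re * (f y).re + (f y).im * (f y).im)
        ((f' x).re * (f x).re + (f x).re * (f' x).re
          + ((f' x).im * (f x).im + (f x).im * (f' x).im)) x :=
      (hre.mul hre).add (him.mul him)
    have hfun : g = fun y => (f y).re * (f y).re + (f y).im * (f y).im := by
      funext y; rw [hg_def]; simp only; rw [norm_sq_c]; ring
    rw [hfun]
    convert h1 using 1
    rw [hgd_def]; ring
  -- norm of v₀
  have hv0norm : ∀ x : ℝ, ‖v₀ x‖ = |x - β| * ‖f x‖ := by
    intro x
    have : v₀ x = ((x - β : ℝ) : ℂ) * f x := by rw [hv0_def]; push_cast; ring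
    rw [this, norm_mul, Complex.norm_real, Real.norm_eq_abs]
  -- measurability of gd
  have hgd_meas : AEStronglyMeasurable gd volume := by
    have h1 : AEStronglyMeasurable (fun x => (f' x).re) volume :=
      Complex.continuous_re.comp_aestronglyMeasurable hf'.1
    have h2 : AEStronglyMeasurable (fun x => (f' x).im) volume :=
      Complex.continuous_im.comp_aestronglyMeasurable hf'.1
    exact ((( (Complex.continuous_re.comp hfc).aestronglyMeasurable.mul h1).add
      ((Complex.continuous_im.comp hfc).aestronglyMeasurable.mul h2)).const_mul 2)
  -- integrabilities
  have hg_int : Integrable g volume := (memLp_two_iff_integrable_sq_norm hf.1).mp hf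
  have hgd_bound : ∀ x, |gd x| ≤ 2 * (‖f x‖ * ‖f' x‖) := by
    intro x
    rw [hgd_def]; simp only
    rw [abs_mul, abs_two]
    have := dot_le_norm_mul_norm (f x) (f' x)
    nlinarith [this, abs_nonneg ((f x).re * (f' x).re + (f x).im * (f' x).im)]
  have hgd_int : Integrable gd volume := by
    refine Integrable.mono' ((integrable_norm_mul_aux hf hf').const_mul 2) hgd_meas
      (Filter.Eventually.of_forall fun x => ?_)
    rw [Real.norm_eq_abs]; exact hgd_bound x
  have hh_int : Integrable (fun x => (x - β) * g x) volume := by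
    refine Integrable.mono' (integrable_norm_mul_aux hv0 hf)
      (((continuous_id.sub continuous_const).mul hgc).aestronglyMeasurable)
      (Filter.Eventually.of_forall fun x => ?_)
    rw [Real.norm_eq_abs, abs_mul, hv0norm x]
    rw [hg_def]; simp only
    rw [abs_of_nonneg (by positivity : (0:ℝ) ≤ ‖f x‖ ^ 2)]
    nlinarith [abs_nonneg (x - β), norm_nonneg (f x)]
  have hxgd_int : Integrable (fun x => (x - β) * gd x) volume := by
    refine Integrable.mono' ((integrable_norm_mul_aux hv0 hf').const_mul 2)
      (((continuous_id.sub continuous_const).aestronglyMeasurable).mul hgd_meas)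
      (Filter.Eventually.of_forall fun x => ?_)
    rw [Real.norm_eq_abs, abs_mul, hv0norm x]
    have h1 := hgd_bound x
    nlinarith [abs_nonneg (x - β), norm_nonneg (f x), norm_nonneg (f' x),
      abs_nonneg (gd x)]
  -- derivative of (x - β) * g x
  have hh_deriv : ∀ x, HasDerivAt (fun x => (x - β) * g x) (g x + (x - β) * gd x) x := by
    intro x
    have : HasDerivAt (fun x => (x - β) * g x) (1 * g x + (x - β) * gd x) x :=
      ((hasDerivAt_id' x).sub_const β).mul (hg_deriv x)
    convert this using 1
    ring
  -- the two key vanishing integrals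
  have key2 : ∫ x, gd x = 0 := integral_deriv_eq_zero_aux hg_deriv hg_int hgd_int
  have key1 : ∫ x, (g x + (x - β) * gd x) = 0 :=
    integral_deriv_eq_zero_aux hh_deriv hh_int (hg_int.add hxgd_int)
  have Ig : ∫ x, g x = - ∫ x, (x - β) * gd x := by
    have := integral_add hg_int hxgd_int
    rw [key1] at this
    linarith [this]
  -- pointwise identity relating (x-β) gd to the dot product of v₀ and u₀
  have pw : ∀ x : ℝ, (x - β) * gd x
      = 2 * ((v₀ x).re * (u₀ x).re + (v₀ x).im * (u₀ x).im) := by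
    intro x
    rw [hgd_def, hv0_def, hu0_def]
    simp only [Complex.sub_re, Complex.sub_im, Complex.mul_re, Complex.mul_im,
      Complex.ofReal_re, Complex.ofReal_im, Complex.I_re, Complex.I_im]
    ring
  -- bound ∫ g by 2 ∫ ‖v₀‖ ‖u₀‖
  have step1 : ∫ x, g x ≤ 2 * ∫ x, ‖v₀ x‖ * ‖u₀ x‖ := by
    rw [Ig]
    rw [← integral_neg]
    have : (2:ℝ) * ∫ x, ‖v₀ x‖ * ‖u₀ x‖ = ∫ x, 2 * (‖v₀ x‖ * ‖u₀ x‖) := by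
      rw [integral_const_mul]
    rw [this]
    refine integral_mono hxgd_int.neg ((integrable_norm_mul_aux hv0 hu0).const_mul 2)
      (fun x => ?_)
    have h1 := dot_le_norm_mul_norm (v₀ x) (u₀ x)
    have h2 := pw x
    simp only [Pi.neg_apply]
    rw [h2]
    nlinarith [abs_nonneg ((v₀ x).re * (u₀ x).re + (v₀ x).im * (u₀ x).im),
      neg_abs_le ((v₀ x).re * (u₀ x).re + (v₀ x).im * (u₀ x).im)]
  -- Cauchy-Schwarz
  have htwo : (ENNReal.ofReal (2:ℝ)) = 2 := by norm_num
  have CS : ∫ x, ‖v₀ x‖ * ‖u₀ x‖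
      ≤ (∫ x, ‖v₀ x‖ ^ 2) ^ ((1:ℝ)/2) * (∫ x, ‖u₀ x‖ ^ 2) ^ ((1:ℝ)/2) := by
    have hpq : Real.HolderConjugate 2 2 := Real.HolderConjugate.two_two
    have := integral_mul_norm_le_Lp_mul_Lq (μ := volume) hpq
      (htwo ▸ hv0) (htwo ▸ hu0)
    have e : ∀ r : ℝ, r ^ (2:ℝ) = r ^ (2:ℕ) := fun r => by
      rw [show (2:ℝ) = ((2:ℕ):ℝ) by norm_num, Real.rpow_natCast]
    simp only [e] at this
    exact this
  -- squared norms are integrable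
  have hu0sq : Integrable (fun x => ‖u₀ x‖ ^ 2) volume :=
    (memLp_two_iff_integrable_sq_norm hu0.1).mp hu0
  have husq : Integrable (fun x => ‖u x‖ ^ 2) volume :=
    (memLp_two_iff_integrable_sq_norm hu.1).mp hu
  have hv0sq : Integrable (fun x => ‖v₀ x‖ ^ 2) volume :=
    (memLp_two_iff_integrable_sq_norm hv0.1).mp hv0
  have hvsq : Integrable (fun x => ‖v x‖ ^ 2) volume :=
    (memLp_two_iff_integrable_sq_norm hv.1).mp hv
  have hg_nonneg : 0 ≤ ∫ x, g x := integral_nonneg fun x => by positivity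
  -- ∫‖u₀‖² ≤ ∫‖u‖²
  have pwu : (fun x => ‖u x‖ ^ 2)
      = fun x => ‖u₀ x‖ ^ 2 + ((-a.re) * gd x + a.re ^ 2 * g x) := by
    funext x
    rw [hu_def, hu0_def, hgd_def, hg_def]
    simp only [norm_sq_c, Complex.sub_re, Complex.sub_im, Complex.mul_re, Complex.mul_im,
      Complex.ofReal_re, Complex.ofReal_im, Complex.I_re, Complex.I_im]
    ring
  have h1i : Integrable (fun x => -a.re * gd x) volume := hgd_int.const_mul _
  have h2i : Integrable (fun x => a.re ^ 2 * g x) volume := hg_int.const_mul _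
  have hresti : Integrable (fun x => -a.re * gd x + a.re ^ 2 * g x) volume := h1i.add h2i
  have hA : ∫ x, ‖u₀ x‖ ^ 2 ≤ ∫ x, ‖u x‖ ^ 2 := by
    have e1 : ∫ x, -a.re * gd x = -a.re * ∫ x, gd x := integral_const_mul _ _
    have e2 : ∫ x, a.re ^ 2 * g x = a.re ^ 2 * ∫ x, g x := integral_const_mul _ _
    rw [pwu, integral_add hu0sq hresti, integral_add h1i h2i, e1, e2, key2]
    nlinarith [sq_nonneg a.re, hg_nonneg]
  -- ∫‖v₀‖² ≤ ∫‖v‖²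
  have pwv : ∀ x, ‖v₀ x‖ ^ 2 ≤ ‖v x‖ ^ 2 := by
    intro x
    have : ‖v x‖ ^ 2 = ‖v₀ x‖ ^ 2 + b.im ^ 2 * ‖f x‖ ^ 2 := by
      rw [hv_def, hv0_def, hβ]
      simp only [norm_sq_c, Complex.sub_re, Complex.sub_im, Complex.mul_re, Complex.mul_im,
        Complex.ofReal_re, Complex.ofReal_im]
      ring
    nlinarith [sq_nonneg b.im, sq_nonneg ‖f x‖]
  have hB : ∫ x, ‖v₀ x‖ ^ 2 ≤ ∫ x, ‖v x‖ ^ 2 := integral_mono hv0sq hvsq pwv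
  -- nonnegativity
  have hA0 : 0 ≤ ∫ x, ‖u₀ x‖ ^ 2 := integral_nonneg fun x => by positivity
  have hB0 : 0 ≤ ∫ x, ‖v₀ x‖ ^ 2 := integral_nonneg fun x => by positivity
  have hA1 : (∫ x, ‖u₀ x‖ ^ 2) ^ ((1:ℝ)/2) ≤ (∫ x, ‖u x‖ ^ 2) ^ ((1:ℝ)/2) :=
    Real.rpow_le_rpow hA0 hA (by norm_num)
  have hB1 : (∫ x, ‖v₀ x‖ ^ 2) ^ ((1:ℝ)/2) ≤ (∫ x, ‖v x‖ ^ 2) ^ ((1:ℝ)/2) :=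
    Real.rpow_le_rpow hB0 hB (by norm_num)
  have pA0 : 0 ≤ (∫ x, ‖u₀ x‖ ^ 2) ^ ((1:ℝ)/2) := Real.rpow_nonneg hA0 _
  have pB0 : 0 ≤ (∫ x, ‖v₀ x‖ ^ 2) ^ ((1:ℝ)/2) := Real.rpow_nonneg hB0 _
  have pA : 0 ≤ (∫ x, ‖u x‖ ^ 2) ^ ((1:ℝ)/2) := le_trans pA0 hA1
  have pB : 0 ≤ (∫ x, ‖v x‖ ^ 2) ^ ((1:ℝ)/2) := le_trans pB0 hB1
  show (∫ x : ℝ, ‖u x‖ ^ 2) ^ ((1 : ℝ) / 2) * (∫ x : ℝ, ‖v x‖ ^ 2) ^ ((1 : ℝ) / 2)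
    ≥ (1 / 2) * ∫ x : ℝ, g x
  have chain : (∫ x, ‖v₀ x‖ ^ 2) ^ ((1:ℝ)/2) * (∫ x, ‖u₀ x‖ ^ 2) ^ ((1:ℝ)/2)
      ≤ (∫ x, ‖v x‖ ^ 2) ^ ((1:ℝ)/2) * (∫ x, ‖u x‖ ^ 2) ^ ((1:ℝ)/2) :=
    mul_le_mul hB1 hA1 pA0 pB
  nlinarith [step1, CS, chain]
end
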